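/- arXiv:math-ph/0210029 — 2 statements merged into one kernel-verified Lean document; each statement's English description precedes it below -/
import Mathlib

section
/- Let ρ > 0, R > 0, A > 0 and let g be holomorphic on Ω := {t ∈ ℂ : Im t > 0, Re t > −ρ} ∪ {t ∈ ℂ : |t| < ρ}, and assume |g(t + iη)| ≤ A η^{−1} e^{t/R} for all t > 0 and all η ∈ (0, ρ). Then for every z ∈ C_R := {z ∈ ℂ : Re(1/z) > 1/R}, the one-sided limit Φ(z) := lim_{ε→0⁺} (1/z) ∫₀^∞ g(t + iε) e^{−t/z} dt exists, and the function z ↦ Φ(z) is holomorphic on C_R. -/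
open MeasureTheory Filter

section CGMAux

open MeasureTheory Filter Set Complex Topology

namespace CGM

lemma abs_cexp_neg_div (z : ℂ) (t y : ℝ) :
    ‖Complex.exp (-((t:ℂ) + (y:ℂ)*Complex.I) / z)‖
      = Real.exp (-(t * (1/z).re) + y * (1/z).im) := by
  rw [Complex.norm_exp]
  congr 1
  have h : -((t:ℂ) + (y:ℂ)*Complex.I) / z = -((t:ℂ) + (y:ℂ)*Complex.I) * (1/z) := by ring
  rw [h, Complex.mul_re]
  simp

lemma S_open {R : ℝ} (hR : 0 < R) : IsOpen {z : ℂ | 1 / R < (1 / z).re} := by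
  rw [isOpen_iff_mem_nhds]
  intro z hz
  have hz0 : z ≠ 0 := by
    rintro rfl
    simp at hz
    have : (0:ℝ) < 1 / R := by positivity
    linarith
  have hc : ContinuousAt (fun w : ℂ => (1 / w).re) z := by
    exact (Complex.continuous_re.continuousAt).comp
      ((continuousAt_const.div continuousAt_id hz0))
  exact hc.preimage_mem_nhds (Ioi_mem_nhds hz)

end CGM

namespace CGM

def Om (ρ : ℝ) : Set ℂ := {t : ℂ | 0 < t.im ∧ -ρ < t.re} ∪ {t : ℂ | ‖t‖ < ρ}

lemma Om_open (ρ : ℝ) : IsOpen (Om ρ) := by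
  apply IsOpen.union
  · exact (isOpen_lt continuous_const Complex.continuous_im).inter
      (isOpen_lt continuous_const Complex.continuous_re)
  · have : {t : ℂ | ‖t‖ < ρ} = Metric.ball 0 ρ := by
      ext t; simp [Metric.mem_ball, Complex.dist_eq]
    rw [this]; exact Metric.isOpen_ball

variable {ρ R A : ℝ} {g : ℂ → ℂ} {z : ℂ}

lemma cont_horiz (hρ : 0 < ρ) (hg : DifferentiableOn ℂ g (Om ρ)) {y : ℝ} (hy : 0 < y) :
    ContinuousOn (fun t : ℝ => g ((t:ℂ) + (y:ℂ)*Complex.I) *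
      Complex.exp (-((t:ℂ) + (y:ℂ)*Complex.I) / z)) (Ici 0) := by
  have hmap : ∀ t : ℝ, t ∈ Ici (0:ℝ) → ((t:ℂ) + (y:ℂ)*Complex.I) ∈ Om ρ := by
    intro t ht
    left
    constructor
    · simp [hy]
    · simp; linarith [ht.out]
  have hc : Continuous (fun t : ℝ => (t:ℂ) + (y:ℂ)*Complex.I) := by continuity
  exact ((hg.continuousOn.comp hc.continuousOn hmap)).mul
    ((Complex.continuous_exp.comp ((hc.neg.div_const z))).continuousOn)

lemma integrableF (hρ : 0 < ρ) (hR : 0 < R)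
    (hg : DifferentiableOn ℂ g (Om ρ))
    (hbound : ∀ t : ℝ, 0 < t → ∀ η : ℝ, η ∈ Set.Ioo 0 ρ →
      ‖g ((t : ℂ) + (η : ℂ) * Complex.I)‖ ≤ A * η⁻¹ * Real.exp (t / R))
    (hz : 1 / R < (1 / z).re) {y : ℝ} (hy : y ∈ Ioo 0 ρ) :
    IntegrableOn (fun t : ℝ => g ((t:ℂ) + (y:ℂ)*Complex.I) *
      Complex.exp (-((t:ℂ) + (y:ℂ)*Complex.I) / z)) (Ioi 0) := by
  set c := (1/z).re with hc
  set d := (1/z).im with hd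
  have hmeas : AEStronglyMeasurable (fun t : ℝ => g ((t:ℂ) + (y:ℂ)*Complex.I) *
      Complex.exp (-((t:ℂ) + (y:ℂ)*Complex.I) / z)) (volume.restrict (Ioi 0)) :=
    ((cont_horiz hρ hg hy.1).mono Ioi_subset_Ici_self).aestronglyMeasurable measurableSet_Ioi
  refine Integrable.mono' (g := fun t : ℝ =>
      (A * y⁻¹ * Real.exp (y * d)) * Real.exp (-((c - 1/R)) * t)) ?_ hmeas ?_
  · exact ((exp_neg_integrableOn_Ioi 0 (by linarith)).const_mul _)
  · filter_upwards [ae_restrict_mem measurableSet_Ioi] with t ht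
    have h1 : ‖g ((t:ℂ) + (y:ℂ)*Complex.I) * Complex.exp (-((t:ℂ) + (y:ℂ)*Complex.I) / z)‖
        = ‖g ((t:ℂ) + (y:ℂ)*Complex.I)‖ * Real.exp (-(t * c) + y * d) := by
      rw [norm_mul, abs_cexp_neg_div]
    rw [h1]
    have h2 := hbound t ht y hy
    calc ‖g ((t:ℂ) + (y:ℂ)*Complex.I)‖ * Real.exp (-(t * c) + y * d)
        ≤ (A * y⁻¹ * Real.exp (t / R)) * Real.exp (-(t * c) + y * d) :=
          mul_le_mul_of_nonneg_right h2 (Real.exp_pos _).le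
      _ = (A * y⁻¹ * Real.exp (y * d)) * Real.exp (-((c - 1/R)) * t) := by
          rw [mul_assoc, mul_assoc, ← Real.exp_add,
            show t / R + (-(t * c) + y * d) = y * d + -(c - 1/R) * t by ring, Real.exp_add]
          ring

end CGM

namespace CGM

variable {ρ R A : ℝ} {g : ℂ → ℂ} {z : ℂ}

lemma contour (hρ : 0 < ρ) (hR : 0 < R) (hA : 0 < A)
    (hg : DifferentiableOn ℂ g (Om ρ))
    (hbound : ∀ t : ℝ, 0 < t → ∀ η : ℝ, η ∈ Set.Ioo 0 ρ →
      ‖g ((t : ℂ) + (η : ℂ) * Complex.I)‖ ≤ A * η⁻¹ * Real.exp (t / R))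
    (hz : 1 / R < (1 / z).re) {ε δ : ℝ} (hε : 0 < ε) (hεδ : ε ≤ δ) (hδ : δ < ρ) :
    (∫ t in Ioi (0:ℝ), g ((t:ℂ)+(ε:ℂ)*Complex.I) * Complex.exp (-((t:ℂ)+(ε:ℂ)*Complex.I)/z))
      = (∫ t in Ioi (0:ℝ), g ((t:ℂ)+(δ:ℂ)*Complex.I) * Complex.exp (-((t:ℂ)+(δ:ℂ)*Complex.I)/z))
        + Complex.I * ∫ y in ε..δ, g ((y:ℂ)*Complex.I) * Complex.exp (-((y:ℂ)*Complex.I)/z) := by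
  set c := (1/z).re with hc
  set d := (1/z).im with hd
  set f : ℂ → ℂ := fun w => g w * Complex.exp (-w / z) with hf
  have hεmem : ε ∈ Ioo 0 ρ := ⟨hε, lt_of_le_of_lt hεδ hδ⟩
  have hδmem : δ ∈ Ioo 0 ρ := ⟨lt_of_lt_of_le hε hεδ, hδ⟩
  have hfdiff : DifferentiableOn ℂ f (Om ρ) :=
    hg.mul ((Complex.differentiable_exp.comp
      ((differentiable_id.neg.div_const z))).differentiableOn)
  -- rectangle identity for T > 0
  have hrect : ∀ T : ℝ, 0 < T →
      (∫ x in (0:ℝ)..T, f ((x:ℂ) + (ε:ℂ)*Complex.I))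
        = (∫ x in (0:ℝ)..T, f ((x:ℂ) + (δ:ℂ)*Complex.I))
          - Complex.I * (∫ y in ε..δ, f ((T:ℂ) + (y:ℂ)*Complex.I))
          + Complex.I * (∫ y in ε..δ, f ((y:ℂ)*Complex.I)) := by
    intro T hT
    have key := Complex.integral_boundary_rect_eq_zero_of_differentiableOn f
      ((ε:ℂ)*Complex.I) ((T:ℂ)+(δ:ℂ)*Complex.I) ?hd
    case hd =>
      have hsub : (Set.uIcc ((ε:ℂ)*Complex.I).re ((T:ℂ)+(δ:ℂ)*Complex.I).re ×ℂ
          Set.uIcc ((ε:ℂ)*Complex.I).im ((T:ℂ)+(δ:ℂ)*Complex.I).im) ⊆ Om ρ := by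
        intro w hw
        rw [Complex.mem_reProdIm] at hw
        obtain ⟨hw1, hw2⟩ := hw
        simp only [Complex.mul_re, Complex.mul_im, Complex.add_re, Complex.add_im,
          Complex.I_re, Complex.I_im, Complex.ofReal_re, Complex.ofReal_im] at hw1 hw2
        norm_num at hw1 hw2
        rw [Set.uIcc_of_le (le_of_lt hT)] at hw1
        rw [Set.uIcc_of_le hεδ] at hw2
        left
        exact ⟨lt_of_lt_of_le hε hw2.1, by linarith [hw1.1]⟩
      exact hfdiff.mono hsub
    · simp only [Complex.mul_re, Complex.mul_im, Complex.add_re, Complex.add_im,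
        Complex.I_re, Complex.I_im, Complex.ofReal_re, Complex.ofReal_im,
        mul_zero, mul_one, zero_mul, sub_zero, zero_add, add_zero, zero_sub, neg_zero,
        Complex.ofReal_zero, smul_eq_mul] at key
      linear_combination key
  have hb : (0:ℝ) < c - 1/R := by linarith
  have h1 : Tendsto (fun T : ℝ => ∫ x in (0:ℝ)..T,
        g ((x:ℂ)+(ε:ℂ)*Complex.I) * Complex.exp (-((x:ℂ)+(ε:ℂ)*Complex.I)/z)) atTop
      (𝓝 (∫ t in Ioi (0:ℝ),
        g ((t:ℂ)+(ε:ℂ)*Complex.I) * Complex.exp (-((t:ℂ)+(ε:ℂ)*Complex.I)/z))) :=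
    intervalIntegral_tendsto_integral_Ioi 0 (integrableF hρ hR hg hbound hz hεmem) tendsto_id
  have h2 : Tendsto (fun T : ℝ => ∫ x in (0:ℝ)..T,
        g ((x:ℂ)+(δ:ℂ)*Complex.I) * Complex.exp (-((x:ℂ)+(δ:ℂ)*Complex.I)/z)) atTop
      (𝓝 (∫ t in Ioi (0:ℝ),
        g ((t:ℂ)+(δ:ℂ)*Complex.I) * Complex.exp (-((t:ℂ)+(δ:ℂ)*Complex.I)/z))) :=
    intervalIntegral_tendsto_integral_Ioi 0 (integrableF hρ hR hg hbound hz hδmem) tendsto_id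
  have h3 : Tendsto (fun T : ℝ => ∫ y in ε..δ, f ((T:ℂ) + (y:ℂ)*Complex.I)) atTop (𝓝 0) := by
    set K := A * ε⁻¹ * Real.exp (δ * |d|) with hK
    apply squeeze_zero_norm'
      (a := fun T : ℝ => (K * Real.exp (-((c - 1/R) * T))) * |δ - ε|)
    · filter_upwards [eventually_gt_atTop (0:ℝ)] with T hT
      apply intervalIntegral.norm_integral_le_of_norm_le_const
      intro y hy
      rw [Set.uIoc_of_le hεδ] at hy
      have hy0 : 0 < y := lt_trans hε hy.1
      have hyρ : y < ρ := lt_of_le_of_lt hy.2 hδ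
      have hnorm : ‖f ((T:ℂ) + (y:ℂ)*Complex.I)‖
          = ‖g ((T:ℂ) + (y:ℂ)*Complex.I)‖ * Real.exp (-(T * c) + y * d) := by
        rw [hf]
        rw [norm_mul, abs_cexp_neg_div]
      rw [hnorm]
      have e2 : y * d ≤ δ * |d| := by
        calc y * d ≤ |y * d| := le_abs_self _
          _ = y * |d| := by rw [abs_mul, abs_of_pos hy0]
          _ ≤ δ * |d| := mul_le_mul_of_nonneg_right hy.2 (abs_nonneg _)
      calc ‖g ((T:ℂ) + (y:ℂ)*Complex.I)‖ * Real.exp (-(T * c) + y * d)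
          ≤ (A * y⁻¹ * Real.exp (T / R)) * Real.exp (-(T * c) + y * d) :=
            mul_le_mul_of_nonneg_right (hbound T hT y ⟨hy0, hyρ⟩) (Real.exp_pos _).le
        _ ≤ (A * ε⁻¹ * Real.exp (T / R)) * Real.exp (-(T * c) + δ * |d|) := by
            have : y⁻¹ ≤ ε⁻¹ := by
              rw [inv_le_inv₀ hy0 hε]
              exact hy.1.le
            gcongr
        _ = K * Real.exp (-((c - 1/R) * T)) := by
            rw [hK, mul_assoc, mul_assoc, ← Real.exp_add, mul_assoc, ← Real.exp_add,
              show T / R + (-(T * c) + δ * |d|) = δ * |d| + -((c - 1/R) * T) by ring]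
            ring
    · have hexp : Tendsto (fun T : ℝ => Real.exp (-((c - 1/R) * T))) atTop (𝓝 0) :=
        Real.tendsto_exp_neg_atTop_nhds_zero.comp (Tendsto.const_mul_atTop hb tendsto_id)
      simpa using (hexp.const_mul K).mul_const (|δ - ε|)
  have h4 : Tendsto (fun T : ℝ => (∫ x in (0:ℝ)..T, f ((x:ℂ) + (δ:ℂ)*Complex.I))
      - Complex.I * (∫ y in ε..δ, f ((T:ℂ) + (y:ℂ)*Complex.I))
      + Complex.I * (∫ y in ε..δ, f ((y:ℂ)*Complex.I))) atTop
      (𝓝 ((∫ t in Ioi (0:ℝ),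
        g ((t:ℂ)+(δ:ℂ)*Complex.I) * Complex.exp (-((t:ℂ)+(δ:ℂ)*Complex.I)/z))
        - Complex.I * 0 + Complex.I * (∫ y in ε..δ, f ((y:ℂ)*Complex.I)))) :=
    ((h2.sub (h3.const_mul Complex.I)).add tendsto_const_nhds)
  have heq : (fun T : ℝ => ∫ x in (0:ℝ)..T,
        g ((x:ℂ)+(ε:ℂ)*Complex.I) * Complex.exp (-((x:ℂ)+(ε:ℂ)*Complex.I)/z))
      =ᶠ[atTop] (fun T : ℝ => (∫ x in (0:ℝ)..T, f ((x:ℂ) + (δ:ℂ)*Complex.I))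
      - Complex.I * (∫ y in ε..δ, f ((T:ℂ) + (y:ℂ)*Complex.I))
      + Complex.I * (∫ y in ε..δ, f ((y:ℂ)*Complex.I))) := by
    filter_upwards [eventually_gt_atTop (0:ℝ)] with T hT using hrect T hT
  have h5 := tendsto_nhds_unique h1 (Tendsto.congr' heq.symm h4)
  simpa using h5

end CGM

namespace CGM

variable {ρ R A : ℝ} {g : ℂ → ℂ} {z : ℂ}

lemma cont_vert (hρ : 0 < ρ) (hg : DifferentiableOn ℂ g (Om ρ)) {δ : ℝ} (hδ : δ < ρ) :
    ContinuousOn (fun y : ℝ => g ((y:ℂ)*Complex.I) *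
      Complex.exp (-((y:ℂ)*Complex.I)/z)) (Icc 0 δ) := by
  have hmap : ∀ y : ℝ, y ∈ Icc (0:ℝ) δ → ((y:ℂ)*Complex.I) ∈ Om ρ := by
    intro y hy
    right
    simp only [Set.mem_setOf_eq, norm_mul, Complex.norm_I, Complex.norm_real, Real.norm_eq_abs, mul_one]
    rw [_root_.abs_of_nonneg hy.1]
    exact lt_of_le_of_lt hy.2 hδ
  have hc : Continuous (fun y : ℝ => (y:ℂ)*Complex.I) := by continuity
  exact (hg.continuousOn.comp hc.continuousOn hmap).mul
    ((Complex.continuous_exp.comp (hc.neg.div_const z)).continuousOn)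

lemma tendsto_Phi (hρ : 0 < ρ) (hR : 0 < R) (hA : 0 < A)
    (hg : DifferentiableOn ℂ g (Om ρ))
    (hbound : ∀ t : ℝ, 0 < t → ∀ η : ℝ, η ∈ Set.Ioo 0 ρ →
      ‖g ((t : ℂ) + (η : ℂ) * Complex.I)‖ ≤ A * η⁻¹ * Real.exp (t / R))
    (hz : 1 / R < (1 / z).re) :
    Filter.Tendsto
      (fun ε : ℝ => (1 / z) *
        ∫ t in Set.Ioi (0:ℝ),
          g ((t : ℂ) + (ε : ℂ) * Complex.I) * Complex.exp (-(t : ℂ) / z))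
      (nhdsWithin 0 (Set.Ioi 0))
      (nhds ((1/z) * ((∫ t in Ioi (0:ℝ), g ((t:ℂ)+(ρ/2:ℝ)*Complex.I) *
          Complex.exp (-((t:ℂ)+(ρ/2:ℝ)*Complex.I)/z))
        + Complex.I * ∫ y in (0:ℝ)..(ρ/2), g ((y:ℂ)*Complex.I) *
          Complex.exp (-((y:ℂ)*Complex.I)/z)))) := by
  set δ : ℝ := ρ/2 with hδdef
  have hδpos : 0 < δ := by positivity
  have hδρ : δ < ρ := by rw [hδdef]; linarith
  have hz0 : z ≠ 0 := by
    rintro rfl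
    simp at hz
    have : (0:ℝ) < 1 / R := by positivity
    linarith
  -- pointwise rewriting for ε ∈ Ioo 0 δ
  have hstep : ∀ ε : ℝ, ε ∈ Ioo 0 δ →
      (∫ t in Set.Ioi (0:ℝ), g ((t:ℂ) + (ε:ℂ)*Complex.I) * Complex.exp (-(t:ℂ)/z))
        = ((∫ t in Ioi (0:ℝ), g ((t:ℂ)+(δ:ℝ)*Complex.I) *
              Complex.exp (-((t:ℂ)+(δ:ℝ)*Complex.I)/z))
            + Complex.I * ∫ y in ε..δ, g ((y:ℂ)*Complex.I) *
              Complex.exp (-((y:ℂ)*Complex.I)/z))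
          * Complex.exp ((ε:ℂ)*Complex.I/z) := by
    intro ε hε
    have h1 : (∫ t in Set.Ioi (0:ℝ), g ((t:ℂ) + (ε:ℂ)*Complex.I) * Complex.exp (-(t:ℂ)/z))
        = (∫ t in Ioi (0:ℝ), g ((t:ℂ)+(ε:ℂ)*Complex.I) *
            Complex.exp (-((t:ℂ)+(ε:ℂ)*Complex.I)/z)) * Complex.exp ((ε:ℂ)*Complex.I/z) := by
      rw [← integral_mul_const]
      congr 1
      funext t
      rw [mul_assoc, ← Complex.exp_add]
      congr 2
      rw [← add_div]
      congr 1
      ring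
    rw [h1, contour hρ hR hA hg hbound hz hε.1 hε.2.le hδρ]
  -- continuity of the vertical piece
  have hcont := cont_vert (z := z) hρ hg hδρ
  obtain ⟨M, hM⟩ := isCompact_Icc.exists_bound_of_continuousOn hcont
  -- small integral tends to zero
  have hsmall : Tendsto (fun ε : ℝ => ∫ y in (0:ℝ)..ε, g ((y:ℂ)*Complex.I) *
      Complex.exp (-((y:ℂ)*Complex.I)/z)) (nhdsWithin 0 (Set.Ioi 0)) (nhds 0) := by
    apply squeeze_zero_norm' (a := fun ε : ℝ => M * ε)
    · filter_upwards [Ioo_mem_nhdsGT_of_mem (Set.left_mem_Ico.2 hδpos)] with ε hε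
      have := intervalIntegral.norm_integral_le_of_norm_le_const (C := M)
        (f := fun y : ℝ => g ((y:ℂ)*Complex.I) * Complex.exp (-((y:ℂ)*Complex.I)/z))
        (a := 0) (b := ε) ?_
      · calc ‖∫ y in (0:ℝ)..ε, g ((y:ℂ)*Complex.I) * Complex.exp (-((y:ℂ)*Complex.I)/z)‖
            ≤ M * |ε - 0| := this
          _ = M * ε := by rw [sub_zero, abs_of_pos hε.1]
      · intro y hy
        rw [Set.uIoc_of_le hε.1.le] at hy
        exact hM y ⟨hy.1.le, le_trans hy.2 hε.2.le⟩
    · have : Tendsto (fun ε : ℝ => M * ε) (nhds 0) (nhds (M * 0)) :=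
        (tendsto_id (α := ℝ)).const_mul M
      rw [mul_zero] at this
      exact this.mono_left nhdsWithin_le_nhds
  -- vertical integral from ε to δ tends to the full one
  have hvert : Tendsto (fun ε : ℝ => ∫ y in ε..δ, g ((y:ℂ)*Complex.I) *
      Complex.exp (-((y:ℂ)*Complex.I)/z)) (nhdsWithin 0 (Set.Ioi 0))
      (nhds (∫ y in (0:ℝ)..δ, g ((y:ℂ)*Complex.I) * Complex.exp (-((y:ℂ)*Complex.I)/z))) := by
    have heq : (fun ε : ℝ => (∫ y in (0:ℝ)..δ, g ((y:ℂ)*Complex.I) *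
        Complex.exp (-((y:ℂ)*Complex.I)/z)) - ∫ y in (0:ℝ)..ε, g ((y:ℂ)*Complex.I) *
        Complex.exp (-((y:ℂ)*Complex.I)/z))
        =ᶠ[nhdsWithin 0 (Set.Ioi 0)] (fun ε : ℝ => ∫ y in ε..δ, g ((y:ℂ)*Complex.I) *
        Complex.exp (-((y:ℂ)*Complex.I)/z)) := by
      filter_upwards [Ioo_mem_nhdsGT_of_mem (Set.left_mem_Ico.2 hδpos)] with ε hε
      have i1 : IntervalIntegrable (fun y : ℝ => g ((y:ℂ)*Complex.I) *
          Complex.exp (-((y:ℂ)*Complex.I)/z)) volume 0 ε := by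
        apply (hcont.mono ?_).intervalIntegrable
        rw [Set.uIcc_of_le hε.1.le]
        exact Icc_subset_Icc le_rfl hε.2.le
      have i2 : IntervalIntegrable (fun y : ℝ => g ((y:ℂ)*Complex.I) *
          Complex.exp (-((y:ℂ)*Complex.I)/z)) volume ε δ := by
        apply (hcont.mono ?_).intervalIntegrable
        rw [Set.uIcc_of_le hε.2.le]
        exact Icc_subset_Icc hε.1.le le_rfl
      have := intervalIntegral.integral_add_adjacent_intervals i1 i2
      linear_combination -this
    refine Tendsto.congr' heq ?_
    simpa using (tendsto_const_nhds (x := ∫ y in (0:ℝ)..δ, g ((y:ℂ)*Complex.I) *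
      Complex.exp (-((y:ℂ)*Complex.I)/z)) (f := nhdsWithin 0 (Set.Ioi (0:ℝ)))).sub hsmall
  -- exp factor tends to 1
  have hexp1 : Tendsto (fun ε : ℝ => Complex.exp ((ε:ℂ)*Complex.I/z))
      (nhdsWithin 0 (Set.Ioi 0)) (nhds 1) := by
    have hc : Continuous (fun ε : ℝ => Complex.exp ((ε:ℂ)*Complex.I/z)) := by continuity
    have := hc.tendsto 0
    simp only [Complex.ofReal_zero, zero_mul, zero_div, Complex.exp_zero] at this
    exact this.mono_left nhdsWithin_le_nhds
  -- combine
  have hfinal : Tendsto (fun ε : ℝ => (1/z) * (((∫ t in Ioi (0:ℝ),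
      g ((t:ℂ)+(δ:ℝ)*Complex.I) * Complex.exp (-((t:ℂ)+(δ:ℝ)*Complex.I)/z))
      + Complex.I * ∫ y in ε..δ, g ((y:ℂ)*Complex.I) * Complex.exp (-((y:ℂ)*Complex.I)/z))
      * Complex.exp ((ε:ℂ)*Complex.I/z))) (nhdsWithin 0 (Set.Ioi 0))
      (nhds ((1/z) * ((∫ t in Ioi (0:ℝ), g ((t:ℂ)+(δ:ℝ)*Complex.I) *
          Complex.exp (-((t:ℂ)+(δ:ℝ)*Complex.I)/z))
        + Complex.I * ∫ y in (0:ℝ)..δ, g ((y:ℂ)*Complex.I) *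
          Complex.exp (-((y:ℂ)*Complex.I)/z)))) := by
    have := (((tendsto_const_nhds (x := ∫ t in Ioi (0:ℝ), g ((t:ℂ)+(δ:ℝ)*Complex.I) *
        Complex.exp (-((t:ℂ)+(δ:ℝ)*Complex.I)/z)) (f := nhdsWithin 0 (Set.Ioi (0:ℝ)))).add
        (hvert.const_mul Complex.I)).mul hexp1).const_mul (1/z)
    simpa using this
  refine Tendsto.congr' ?_ hfinal
  filter_upwards [Ioo_mem_nhdsGT_of_mem (Set.left_mem_Ico.2 hδpos)] with ε hε
  rw [hstep ε hε]

end CGM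

namespace CGM

variable {ρ R A : ℝ} {g : ℂ → ℂ} {z : ℂ}

lemma hasDerivAt_cexp_div (w : ℂ) {z : ℂ} (hz : z ≠ 0) :
    HasDerivAt (fun u : ℂ => Complex.exp (-w/u)) (Complex.exp (-w/z) * (w / z^2)) z := by
  have h0 : HasDerivAt (fun u : ℂ => -w / u) (w / z^2) z := by
    have := (hasDerivAt_inv hz).const_mul (-w)
    simp only [div_eq_mul_inv]
    exact this.congr_deriv (by ring)
  exact h0.cexp

-- radius selection around a point of C_R
lemma ball_setup {z₀ : ℂ} (hR : 0 < R) (hz₀ : 1/R < (1/z₀).re) :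
    ∃ r m c₀ : ℝ, 0 < r ∧ 0 < m ∧ 1/R < c₀ ∧
      (∀ z ∈ Metric.closedBall z₀ r, z ≠ 0 ∧ m ≤ ‖z‖ ∧ c₀ ≤ (1/z).re) := by
  have hz00 : z₀ ≠ 0 := by
    rintro rfl
    simp at hz₀
    have : (0:ℝ) < 1/R := by positivity
    linarith
  obtain ⟨r₁, hr₁, hball⟩ := Metric.nhds_basis_closedBall.mem_iff.1
    ((S_open hR).mem_nhds hz₀)
  set r := min r₁ (‖z₀‖ / 2) with hr
  have hrpos : 0 < r := lt_min hr₁ (half_pos (norm_pos_iff.mpr hz00))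
  have hKS : Metric.closedBall z₀ r ⊆ {z : ℂ | 1 / R < (1 / z).re} :=
    subset_trans (Metric.closedBall_subset_closedBall (min_le_left _ _)) hball
  have hm : ∀ z ∈ Metric.closedBall z₀ r, ‖z₀‖ / 2 ≤ ‖z‖ := by
    intro z hzK
    have h1 : ‖z₀ - z‖ ≤ ‖z₀‖ / 2 := by
      rw [Metric.mem_closedBall, dist_eq_norm] at hzK
      calc ‖z₀ - z‖ = ‖z - z₀‖ := by rw [norm_sub_rev]
        _ ≤ r := hzK
        _ ≤ _ := min_le_right _ _
    have h2 : ‖z₀‖ - ‖z‖ ≤ ‖z₀ - z‖ := by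
      simpa using norm_sub_norm_le z₀ z
    linarith
  -- minimum of (1/z).re on the closed ball
  have hKne : (Metric.closedBall z₀ r).Nonempty := ⟨z₀, Metric.mem_closedBall_self hrpos.le⟩
  have hKc : IsCompact (Metric.closedBall z₀ r) := isCompact_closedBall _ _
  have hcont : ContinuousOn (fun z : ℂ => (1/z).re) (Metric.closedBall z₀ r) := by
    intro z hzK
    have hz0 : z ≠ 0 := by
      intro h
      have h2 := hm z hzK
      rw [h] at h2
      simp at h2
      have := norm_pos_iff.mpr hz00
      linarith
    exact (Complex.continuous_re.continuousAt.comp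
      (continuousAt_const.div continuousAt_id hz0)).continuousWithinAt
  obtain ⟨z₁, hz₁K, hz₁min⟩ := hKc.exists_isMinOn hKne hcont
  refine ⟨r, ‖z₀‖ / 2, (1/z₁).re, hrpos, half_pos (norm_pos_iff.mpr hz00),
    hKS hz₁K, ?_⟩
  intro z hzK
  refine ⟨?_, hm z hzK, hz₁min hzK⟩
  intro h
  have h2 := hm z hzK
  rw [h] at h2
  simp at h2
  have := norm_pos_iff.mpr hz00
  linarith

end CGM

namespace CGM

variable {ρ R A : ℝ} {g : ℂ → ℂ} {z : ℂ}

lemma diffAt_G2 (hρ : 0 < ρ) (hR : 0 < R) (hA : 0 < A)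
    (hg : DifferentiableOn ℂ g (Om ρ))
    (hbound : ∀ t : ℝ, 0 < t → ∀ η : ℝ, η ∈ Set.Ioo 0 ρ →
      ‖g ((t : ℂ) + (η : ℂ) * Complex.I)‖ ≤ A * η⁻¹ * Real.exp (t / R))
    {z₀ : ℂ} (hz₀ : 1/R < (1/z₀).re) :
    DifferentiableAt ℂ (fun z : ℂ => ∫ t in Ioi (0:ℝ),
      g ((t:ℂ)+(ρ/2:ℝ)*Complex.I) * Complex.exp (-((t:ℂ)+(ρ/2:ℝ)*Complex.I)/z)) z₀ := by
  set δ : ℝ := ρ/2 with hδdef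
  have hδpos : 0 < δ := by positivity
  have hδρ : δ < ρ := by rw [hδdef]; linarith
  have hδmem : δ ∈ Ioo 0 ρ := ⟨hδpos, hδρ⟩
  obtain ⟨r, m, c₀, hrpos, hmpos, hc₀, hK⟩ := ball_setup hR hz₀
  set b : ℝ := c₀ - 1/R with hbdef
  have hb : 0 < b := by rw [hbdef]; linarith
  set C : ℝ := A * δ⁻¹ * Real.exp (δ/m) * (m^2)⁻¹ * (2/b + δ) with hC
  have key := hasDerivAt_integral_of_dominated_loc_of_deriv_le (𝕜 := ℂ)
    (μ := volume.restrict (Ioi (0:ℝ))) (x₀ := z₀)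
    (F := fun z (t : ℝ) => g ((t:ℂ)+(δ:ℝ)*Complex.I) *
      Complex.exp (-((t:ℂ)+(δ:ℝ)*Complex.I)/z))
    (F' := fun z (t : ℝ) => g ((t:ℂ)+(δ:ℝ)*Complex.I) *
      (Complex.exp (-((t:ℂ)+(δ:ℝ)*Complex.I)/z) * (((t:ℂ)+(δ:ℝ)*Complex.I) / z^2)))
    (bound := fun t : ℝ => C * Real.exp (-(b/2) * t))
    (Metric.ball_mem_nhds z₀ hrpos) ?hmeas ?hint ?hmeas' ?hb ?hbint ?hdiff
  case hmeas =>
    filter_upwards with z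
    exact ((cont_horiz (z := z) hρ hg hδpos).mono Ioi_subset_Ici_self).aestronglyMeasurable
      measurableSet_Ioi
  case hint => exact integrableF hρ hR hg hbound hz₀ hδmem
  case hmeas' =>
    apply ContinuousOn.aestronglyMeasurable _ measurableSet_Ioi
    have hc : Continuous (fun t : ℝ => (t:ℂ)+(δ:ℝ)*Complex.I) := by continuity
    have hgcont : ContinuousOn (fun t : ℝ => g ((t:ℂ)+(δ:ℝ)*Complex.I)) (Ioi 0) := by
      apply hg.continuousOn.comp hc.continuousOn
      intro t ht
      left
      constructor
      · simp [hδpos]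
      · simp; linarith [ht.out]
    exact hgcont.mul (((Complex.continuous_exp.comp (hc.neg.div_const z₀)).mul
      (hc.div_const (z₀^2))).continuousOn)
  case hbint =>
    exact (exp_neg_integrableOn_Ioi 0 (by positivity : (0:ℝ) < b/2)).const_mul C
  case hdiff =>
    filter_upwards [ae_restrict_mem measurableSet_Ioi] with t _ z hzball
    have hz0 : z ≠ 0 := (hK z (Metric.ball_subset_closedBall hzball)).1
    exact (hasDerivAt_cexp_div ((t:ℂ)+(δ:ℝ)*Complex.I) hz0).const_mul _
  case hb =>
    filter_upwards [ae_restrict_mem measurableSet_Ioi] with t ht z hzball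
    obtain ⟨hz0, hzm, hzc⟩ := hK z (Metric.ball_subset_closedBall hzball)
    have habs : 0 < ‖z‖ := norm_pos_iff.mpr hz0
    -- decompose the norm
    have hn : ‖g ((t:ℂ)+(δ:ℝ)*Complex.I) *
        (Complex.exp (-((t:ℂ)+(δ:ℝ)*Complex.I)/z) * (((t:ℂ)+(δ:ℝ)*Complex.I) / z^2))‖
        = ‖g ((t:ℂ)+(δ:ℝ)*Complex.I)‖ *
          (Real.exp (-(t * (1/z).re) + δ * (1/z).im) *
            (‖(t:ℂ)+(δ:ℝ)*Complex.I‖ / (‖z‖)^2)) := by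
      rw [norm_mul, norm_mul, abs_cexp_neg_div, norm_div, norm_pow]
    rw [hn]
    have h1 : ‖g ((t:ℂ)+(δ:ℝ)*Complex.I)‖ ≤ A * δ⁻¹ * Real.exp (t / R) :=
      hbound t ht δ hδmem
    have h2 : ‖(t:ℂ)+(δ:ℝ)*Complex.I‖ ≤ t + δ := by
      have := Complex.norm_le_abs_re_add_abs_im ((t:ℂ)+(δ:ℝ)*Complex.I)
      simp only [Complex.add_re, Complex.add_im, Complex.ofReal_re, Complex.ofReal_im,
        Complex.mul_re, Complex.mul_im, Complex.I_re, Complex.I_im] at this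
      calc ‖(t:ℂ)+(δ:ℝ)*Complex.I‖ ≤ |t + (δ*0-0*1)| + |0 + (δ*1+0*0)| := this
        _ = t + δ := by
            rw [show (t + (δ*0-0*1):ℝ) = t by ring, show ((0:ℝ) + (δ*1+0*0):ℝ) = δ by ring,
              _root_.abs_of_pos ht.out, _root_.abs_of_pos hδpos]
    have h3 : -(t * (1/z).re) + δ * (1/z).im ≤ -(t * c₀) + δ / m := by
      have e1 : t * c₀ ≤ t * (1/z).re := mul_le_mul_of_nonneg_left hzc ht.out.le
      have e2 : δ * (1/z).im ≤ δ / m := by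
        have i1 : (1/z).im ≤ ‖1/z‖ := le_trans (le_abs_self _)
          (Complex.abs_im_le_norm _)
        have i2 : ‖1/z‖ ≤ 1/m := by
          rw [norm_div, norm_one]
          exact one_div_le_one_div_of_le hmpos hzm
        calc δ * (1/z).im ≤ δ * (1/m) := mul_le_mul_of_nonneg_left (le_trans i1 i2) hδpos.le
          _ = δ / m := by ring
      linarith
    have h4 : (‖(t:ℂ)+(δ:ℝ)*Complex.I‖ / (‖z‖)^2) ≤ (t + δ) / m^2 := by
      apply div_le_div₀ (by have := ht.out; positivity) h2 (by positivity)
      exact pow_le_pow_left₀ hmpos.le hzm 2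
    have hexpeq : Real.exp (t/R) * Real.exp (-(t*c₀)+δ/m)
        = Real.exp (δ/m) * Real.exp (-(b*t)) := by
      rw [← Real.exp_add, ← Real.exp_add]
      congr 1
      rw [hbdef]
      ring
    have h5 : b/2*t ≤ Real.exp (b/2*t) :=
      le_trans (by linarith) (Real.add_one_le_exp _)
    have ht1 : t ≤ 2/b * Real.exp (b/2*t) := by
      calc t = 2/b*(b/2*t) := by field_simp
        _ ≤ 2/b * Real.exp (b/2*t) := by gcongr
    have ht2 : δ ≤ δ * Real.exp (b/2*t) :=
      le_mul_of_one_le_right hδpos.le (Real.one_le_exp (mul_nonneg (by positivity) ht.out.le))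
    have hsum : t + δ ≤ (2/b + δ) * Real.exp (b/2*t) := by
      rw [add_mul]
      exact add_le_add ht1 ht2
    have hstep3 : (t+δ) * Real.exp (-(b*t)) ≤ (2/b+δ) * Real.exp (-(b/2)*t) := by
      calc (t+δ) * Real.exp (-(b*t))
          ≤ ((2/b + δ) * Real.exp (b/2*t)) * Real.exp (-(b*t)) :=
            mul_le_mul_of_nonneg_right hsum (Real.exp_pos _).le
        _ = (2/b+δ) * Real.exp (-(b/2)*t) := by
            rw [mul_assoc, ← Real.exp_add, show b/2*t + -(b*t) = -(b/2)*t by ring]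
    calc ‖g ((t:ℂ)+(δ:ℝ)*Complex.I)‖ *
          (Real.exp (-(t * (1/z).re) + δ * (1/z).im) *
            (‖(t:ℂ)+(δ:ℝ)*Complex.I‖ / (‖z‖)^2))
        ≤ (A * δ⁻¹ * Real.exp (t / R)) *
          (Real.exp (-(t*c₀)+δ/m) * ((t + δ) / m^2)) := by
          apply mul_le_mul h1 ?_ ?_ (by positivity)
          · exact mul_le_mul (Real.exp_le_exp.2 h3) h4
              (div_nonneg (norm_nonneg _) (by positivity)) (Real.exp_pos _).le
          · exact mul_nonneg (Real.exp_pos _).le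
              (div_nonneg (norm_nonneg _) (by positivity))
      _ = (A * δ⁻¹ * (Real.exp (t/R) * Real.exp (-(t*c₀)+δ/m))) * ((t+δ)/m^2) := by ring
      _ = (A * δ⁻¹ * Real.exp (δ/m) * (m^2)⁻¹) * ((t+δ) * Real.exp (-(b*t))) := by
          rw [hexpeq]
          ring
      _ ≤ (A * δ⁻¹ * Real.exp (δ/m) * (m^2)⁻¹) * ((2/b+δ) * Real.exp (-(b/2)*t)) := by
          apply mul_le_mul_of_nonneg_left hstep3 (by positivity)
      _ = C * Real.exp (-(b/2) * t) := by rw [hC]; ring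
  exact key.2.differentiableAt

end CGM

namespace CGM

variable {ρ R A : ℝ} {g : ℂ → ℂ} {z : ℂ}

lemma diffAt_G1 (hρ : 0 < ρ) (hR : 0 < R)
    (hg : DifferentiableOn ℂ g (Om ρ))
    {z₀ : ℂ} (hz₀ : 1/R < (1/z₀).re) :
    DifferentiableAt ℂ (fun z : ℂ => ∫ y in (0:ℝ)..(ρ/2),
      g ((y:ℂ)*Complex.I) * Complex.exp (-((y:ℂ)*Complex.I)/z)) z₀ := by
  set δ : ℝ := ρ/2 with hδdef
  have hδpos : 0 < δ := by positivity
  have hδρ : δ < ρ := by rw [hδdef]; linarith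
  obtain ⟨r, m, c₀, hrpos, hmpos, hc₀, hK⟩ := ball_setup hR hz₀
  have hfun : (fun z : ℂ => ∫ y in (0:ℝ)..δ,
      g ((y:ℂ)*Complex.I) * Complex.exp (-((y:ℂ)*Complex.I)/z))
      = (fun z : ℂ => ∫ y in Ioc (0:ℝ) δ,
      g ((y:ℂ)*Complex.I) * Complex.exp (-((y:ℂ)*Complex.I)/z)) :=
    funext fun z => intervalIntegral.integral_of_le hδpos.le
  rw [hfun]
  have hc : Continuous (fun y : ℝ => (y:ℂ)*Complex.I) := by continuity
  have hgc : ContinuousOn (fun y : ℝ => g ((y:ℂ)*Complex.I)) (Icc 0 δ) := by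
    apply hg.continuousOn.comp hc.continuousOn
    intro y hy
    right
    simp only [Set.mem_setOf_eq, norm_mul, Complex.norm_I, Complex.norm_real, Real.norm_eq_abs, mul_one]
    rw [_root_.abs_of_nonneg hy.1]
    exact lt_of_le_of_lt hy.2 hδρ
  obtain ⟨M, hM⟩ := isCompact_Icc.exists_bound_of_continuousOn hgc
  have key := hasDerivAt_integral_of_dominated_loc_of_deriv_le (𝕜 := ℂ)
    (μ := volume.restrict (Ioc (0:ℝ) δ)) (x₀ := z₀)
    (F := fun z (y : ℝ) => g ((y:ℂ)*Complex.I) * Complex.exp (-((y:ℂ)*Complex.I)/z))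
    (F' := fun z (y : ℝ) => g ((y:ℂ)*Complex.I) *
      (Complex.exp (-((y:ℂ)*Complex.I)/z) * (((y:ℂ)*Complex.I) / z^2)))
    (bound := fun _ : ℝ => M * Real.exp (δ/m) * (δ/m^2))
    (Metric.ball_mem_nhds z₀ hrpos) ?hmeas ?hint ?hmeas' ?hb ?hbint ?hdiff
  case hmeas =>
    filter_upwards with z
    exact ((cont_vert (z := z) hρ hg hδρ).mono Ioc_subset_Icc_self).aestronglyMeasurable
      measurableSet_Ioc
  case hint =>
    exact ((cont_vert (z := z₀) hρ hg hδρ).integrableOn_Icc).mono_set Ioc_subset_Icc_self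
  case hmeas' =>
    apply ContinuousOn.aestronglyMeasurable _ measurableSet_Ioc
    apply ((hgc.mono Ioc_subset_Icc_self)).mul
    exact (((Complex.continuous_exp.comp (hc.neg.div_const z₀)).mul
      (hc.div_const (z₀^2))).continuousOn)
  case hbint =>
    rw [integrable_const_iff]
    right
    exact isFiniteMeasure_restrict.2 measure_Ioc_lt_top.ne
  case hdiff =>
    filter_upwards [ae_restrict_mem measurableSet_Ioc] with y _ z hzball
    have hz0 : z ≠ 0 := (hK z (Metric.ball_subset_closedBall hzball)).1
    exact (hasDerivAt_cexp_div ((y:ℂ)*Complex.I) hz0).const_mul _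
  case hb =>
    filter_upwards [ae_restrict_mem measurableSet_Ioc] with y hy z hzball
    obtain ⟨hz0, hzm, hzc⟩ := hK z (Metric.ball_subset_closedBall hzball)
    have habs : 0 < ‖z‖ := norm_pos_iff.mpr hz0
    have hyI : ((y:ℝ):ℂ)*Complex.I = ((0:ℝ):ℂ) + (y:ℂ)*Complex.I := by simp
    have hn : ‖g ((y:ℂ)*Complex.I) *
        (Complex.exp (-((y:ℂ)*Complex.I)/z) * (((y:ℂ)*Complex.I) / z^2))‖
        = ‖g ((y:ℂ)*Complex.I)‖ *
          (Real.exp (y * (1/z).im) * (|y| / (‖z‖)^2)) := by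
      rw [norm_mul, norm_mul, norm_div, norm_pow]
      congr 2
      · rw [hyI, abs_cexp_neg_div]
        norm_num
      · simp
    rw [hn]
    have h1 : ‖g ((y:ℂ)*Complex.I)‖ ≤ M := by
      have := hM y ⟨hy.1.le, hy.2⟩
      exact this
    have h2 : y * (1/z).im ≤ δ / m := by
      have i1 : (1/z).im ≤ ‖1/z‖ := le_trans (le_abs_self _)
        (Complex.abs_im_le_norm _)
      have i2 : ‖1/z‖ ≤ 1/m := by
        rw [norm_div, norm_one]
        exact one_div_le_one_div_of_le hmpos hzm
      calc y * (1/z).im ≤ y * (1/m) := mul_le_mul_of_nonneg_left (le_trans i1 i2) hy.1.le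
        _ ≤ δ * (1/m) := mul_le_mul_of_nonneg_right hy.2 (by positivity)
        _ = δ / m := by ring
    have h3 : |y| / (‖z‖)^2 ≤ δ / m^2 := by
      apply div_le_div₀ (by positivity) ?_ (by positivity) (pow_le_pow_left₀ hmpos.le hzm 2)
      rw [_root_.abs_of_pos hy.1]
      exact hy.2
    have hMnn : 0 ≤ M := le_trans (norm_nonneg _) h1
    calc ‖g ((y:ℂ)*Complex.I)‖ *
          (Real.exp (y * (1/z).im) * (|y| / (‖z‖)^2))
        ≤ M * (Real.exp (δ/m) * (δ/m^2)) := by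
          apply mul_le_mul h1 ?_ ?_ hMnn
          · exact mul_le_mul (Real.exp_le_exp.2 h2) h3 (by positivity) (Real.exp_pos _).le
          · exact mul_nonneg (Real.exp_pos _).le (by positivity)
      _ = M * Real.exp (δ/m) * (δ/m^2) := by ring
  exact key.2.differentiableAt

end CGM

end CGMAux

/-- Existence and analyticity part of the fundamental criterion for distributional Borel
summability (Caliceti–Grecchi–Maioli): if `g` is holomorphic on
`Ω = {Im t > 0, Re t > -ρ} ∪ {|t| < ρ}` and satisfies `|g(t+iη)| ≤ A η⁻¹ e^{t/R}` for all
`t > 0`, `η ∈ (0,ρ)`, then for every `z` in the disk `C_R = {Re (1/z) > 1/R}` the one-sided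
limit `Φ(z) = lim_{ε→0⁺} (1/z) ∫₀^∞ g(t+iε) e^{-t/z} dt` exists, and `Φ` is holomorphic
on `C_R`. -/
theorem upper_sum_exists_and_analytic
    (ρ R A : ℝ) (hρ : 0 < ρ) (hR : 0 < R) (hA : 0 < A) (g : ℂ → ℂ)
    (hg : DifferentiableOn ℂ g
      ({t : ℂ | 0 < t.im ∧ -ρ < t.re} ∪ {t : ℂ | ‖t‖ < ρ}))
    (hbound : ∀ t : ℝ, 0 < t → ∀ η : ℝ, η ∈ Set.Ioo 0 ρ →
      ‖g ((t : ℂ) + (η : ℂ) * Complex.I)‖ ≤ A * η⁻¹ * Real.exp (t / R)) :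
    ∃ Φ : ℂ → ℂ,
      (∀ z ∈ {z : ℂ | 1 / R < (1 / z).re},
        Filter.Tendsto
          (fun ε : ℝ => (1 / z) *
            ∫ t in Set.Ioi (0:ℝ),
              g ((t : ℂ) + (ε : ℂ) * Complex.I) * Complex.exp (-(t : ℂ) / z))
          (nhdsWithin 0 (Set.Ioi 0)) (nhds (Φ z))) ∧
      DifferentiableOn ℂ Φ {z : ℂ | 1 / R < (1 / z).re} := by
  have hg' : DifferentiableOn ℂ g (CGM.Om ρ) := hg
  refine ⟨fun z => (1/z) * ((∫ t in Set.Ioi (0:ℝ), g ((t:ℂ)+(ρ/2:ℝ)*Complex.I) *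
      Complex.exp (-((t:ℂ)+(ρ/2:ℝ)*Complex.I)/z))
    + Complex.I * ∫ y in (0:ℝ)..(ρ/2), g ((y:ℂ)*Complex.I) *
      Complex.exp (-((y:ℂ)*Complex.I)/z)), ?_, ?_⟩
  · intro z hz
    exact CGM.tendsto_Phi hρ hR hA hg' hbound hz
  · intro z₀ hz₀
    have h0 : z₀ ≠ 0 := by
      rintro rfl
      simp only [Set.mem_setOf_eq] at hz₀
      rw [div_zero] at hz₀
      simp at hz₀
      have : (0:ℝ) < 1/R := by positivity
      linarith
    apply DifferentiableAt.differentiableWithinAt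
    apply DifferentiableAt.mul
    · exact (differentiableAt_const (1:ℂ)).div differentiableAt_id h0
    · exact (CGM.diffAt_G2 hρ hR hA hg' hbound hz₀).add
        ((CGM.diffAt_G1 hρ hR hg' hz₀).const_mul Complex.I)
end

section
/- For every β in the open first quadrant {β ∈ ℂ : 0 < arg β < π/2}, the integral Φ(β) := (1/(8π²)) ∫₀^∞ (e^{−t}/t³)·[2√π β t · cot(2√π β t) − 1 + (4π/3) β² t²] dt converges absolutely, and the function β ↦ Φ(β) is holomorphic on the open first quadrant. -/
open MeasureTheory Filter

/-- The integrand of the rotated effective action `Φ(β)`. -/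
noncomputable def phiIntegrand (β : ℂ) (t : ℝ) : ℂ :=
  (Complex.exp (-(t : ℂ)) / (t : ℂ) ^ 3) *
    (2 * (Real.sqrt Real.pi : ℂ) * β * (t : ℂ) *
        Complex.cot (2 * (Real.sqrt Real.pi : ℂ) * β * (t : ℂ))
      - 1 + 4 * (Real.pi : ℂ) * β ^ 2 * (t : ℂ) ^ 2 / 3)

/-- The rotated effective action
`Φ(β) = (1/(8π²)) ∫₀^∞ (e^{-t}/t³)[2√π β t cot(2√π β t) - 1 + (4π/3)β²t²] dt`. -/
noncomputable def PhiRot (β : ℂ) : ℂ :=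
  (1 / (8 * (Real.pi : ℂ) ^ 2)) * ∫ t in Set.Ioi (0:ℝ), phiIntegrand β t


open Complex Finset

noncomputable def Complex.abs : AbsoluteValue ℂ ℝ :=
  IsAbsoluteValue.toAbsoluteValue (norm : ℂ → ℝ)

@[simp] lemma Complex.abs_apply' (z : ℂ) : Complex.abs z = ‖z‖ := rfl

lemma Complex.abs_two : Complex.abs 2 = 2 := by simp

lemma Complex.abs_ofReal (r : ℝ) : Complex.abs (r : ℂ) = |r| := by simp

lemma Complex.abs_exp (z : ℂ) : Complex.abs (Complex.exp z) = Real.exp z.re := by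
  simp [Complex.norm_exp]

lemma Complex.abs_im_le_abs (z : ℂ) : |z.im| ≤ Complex.abs z := Complex.abs_im_le_norm z

lemma Complex.abs_mul_sin_arg (z : ℂ) : Complex.abs z * Real.sin (Complex.arg z) = z.im := by
  simpa using Complex.norm_mul_sin_arg z

lemma Complex.norm_eq_abs (z : ℂ) : ‖z‖ = Complex.abs z := rfl


lemma my_sin_taylor (z : ℂ) (hz : Complex.abs z ≤ 1) :
    Complex.abs (Complex.sin z - (z - z^3/6)) ≤ Complex.abs z ^ 4 * (5/96) := by
  have h1 : Complex.abs (z * I) ≤ 1 := by simpa using hz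
  have h2 : Complex.abs (-z * I) ≤ 1 := by simpa using hz
  have e1 := Complex.exp_bound h1 (by norm_num : 0 < 4)
  have e2 := Complex.exp_bound h2 (by norm_num : 0 < 4)
  have key : Complex.sin z - (z - z^3/6) =
      (Complex.exp (-z*I) - ∑ m ∈ Finset.range 4, (-z*I)^m / m.factorial) * I / 2
      - (Complex.exp (z*I) - ∑ m ∈ Finset.range 4, (z*I)^m / m.factorial) * I / 2 := by
    simp only [Complex.sin, Finset.sum_range_succ, Finset.sum_range_zero]
    norm_num [Nat.factorial]
    ring_nf
    simp [Complex.I_sq]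
  rw [key]
  have a1 : Complex.abs (z*I) = Complex.abs z := by simp
  have a2 : Complex.abs (-z*I) = Complex.abs z := by simp
  simp only [← Complex.abs_apply'] at e1 e2
  rw [a1] at e1; rw [a2] at e2
  have habs : ∀ w : ℂ, Complex.abs (w * I / 2) = Complex.abs w / 2 := by
    intro w; rw [map_div₀, map_mul]; simp
  calc Complex.abs _
      ≤ Complex.abs ((Complex.exp (-z*I) - ∑ m ∈ Finset.range 4, (-z*I)^m / m.factorial) * I / 2)
        + Complex.abs ((Complex.exp (z*I) - ∑ m ∈ Finset.range 4, (z*I)^m / m.factorial) * I / 2) :=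
      Complex.abs.sub_le_add _ _
    _ ≤ Complex.abs z ^ 4 * (5/96) := by
        rw [habs, habs]
        have : ((4:ℕ).succ : ℝ) * (((4:ℕ).factorial * (4:ℕ) : ℝ))⁻¹ = 5/96 := by
          norm_num [Nat.factorial]
        rw [this] at e1 e2
        linarith

lemma my_cos_taylor (z : ℂ) (hz : Complex.abs z ≤ 1) :
    Complex.abs (Complex.cos z - (1 - z^2/2)) ≤ Complex.abs z ^ 4 * (5/96) := by
  have h1 : Complex.abs (z * I) ≤ 1 := by simpa using hz
  have h2 : Complex.abs (-z * I) ≤ 1 := by simpa using hz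
  have e1 := Complex.exp_bound h1 (by norm_num : 0 < 4)
  have e2 := Complex.exp_bound h2 (by norm_num : 0 < 4)
  have key : Complex.cos z - (1 - z^2/2) =
      (Complex.exp (z*I) - ∑ m ∈ Finset.range 4, (z*I)^m / m.factorial) / 2
      + (Complex.exp (-z*I) - ∑ m ∈ Finset.range 4, (-z*I)^m / m.factorial) / 2 := by
    simp only [Complex.cos, Finset.sum_range_succ, Finset.sum_range_zero]
    norm_num [Nat.factorial]
    ring_nf
    simp [Complex.I_sq]
    ring
  rw [key]
  have a1 : Complex.abs (z*I) = Complex.abs z := by simp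
  have a2 : Complex.abs (-z*I) = Complex.abs z := by simp
  simp only [← Complex.abs_apply'] at e1 e2
  rw [a1] at e1; rw [a2] at e2
  have habs : ∀ w : ℂ, Complex.abs (w / 2) = Complex.abs w / 2 := by
    intro w; rw [map_div₀]; simp
  calc Complex.abs _
      ≤ Complex.abs ((Complex.exp (z*I) - ∑ m ∈ Finset.range 4, (z*I)^m / m.factorial) / 2)
        + Complex.abs ((Complex.exp (-z*I) - ∑ m ∈ Finset.range 4, (-z*I)^m / m.factorial) / 2) :=
      Complex.abs.add_le _ _
    _ ≤ Complex.abs z ^ 4 * (5/96) := by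
        rw [habs, habs]
        have : ((4:ℕ).succ : ℝ) * (((4:ℕ).factorial * (4:ℕ) : ℝ))⁻¹ = 5/96 := by
          norm_num [Nat.factorial]
        rw [this] at e1 e2
        linarith

lemma my_sin_sub_self (z : ℂ) (hz : Complex.abs z ≤ 1) :
    Complex.abs (Complex.sin z - z) ≤ Complex.abs z ^ 3 / 4 := by
  have h := my_sin_taylor z hz
  have : Complex.sin z - z = (Complex.sin z - (z - z^3/6)) + (- z^3/6) := by ring
  rw [this]
  have habs : Complex.abs (-z^3/6) = Complex.abs z ^ 3 / 6 := by
    rw [show (-z^3/6 : ℂ) = -(z^3/6) by ring, Complex.abs.map_neg, map_div₀, map_pow]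
    norm_num
  have h3 : Complex.abs z ^ 4 ≤ Complex.abs z ^ 3 :=
    pow_le_pow_of_le_one (Complex.abs.nonneg z) hz (by norm_num)
  have h4 := mul_le_mul_of_nonneg_right h3 (by norm_num : (0:ℝ) ≤ 5/96)
  calc Complex.abs _ ≤ Complex.abs (Complex.sin z - (z - z^3/6)) + Complex.abs (-z^3/6) :=
        Complex.abs.add_le _ _
    _ ≤ Complex.abs z ^ 3 / 4 := by rw [habs]; nlinarith [pow_nonneg (Complex.abs.nonneg z) 3]

lemma my_sin_lower (z : ℂ) (hz : Complex.abs z ≤ 1) :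
    Complex.abs z / 2 ≤ Complex.abs (Complex.sin z) := by
  have h := my_sin_sub_self z hz
  have h2 : Complex.abs z ≤ Complex.abs (Complex.sin z) + Complex.abs z ^ 3 / 4 := by
    calc Complex.abs z = Complex.abs (Complex.sin z - (Complex.sin z - z)) := by
          rw [sub_sub_cancel]
      _ ≤ Complex.abs (Complex.sin z) + Complex.abs (Complex.sin z - z) :=
          Complex.abs.sub_le_add _ _
      _ ≤ _ := by linarith
  have h3 : Complex.abs z ^ 3 ≤ Complex.abs z := by
    calc Complex.abs z ^ 3 ≤ Complex.abs z ^ 1 :=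
      pow_le_pow_of_le_one (Complex.abs.nonneg z) hz (by norm_num)
    _ = Complex.abs z := pow_one _
  nlinarith [Complex.abs.nonneg z]

-- |z cot z - 1 + z²/3| ≤ 2|z|³ for |z| ≤ 1, sin z ≠ 0
lemma my_g_small (z : ℂ) (hs : Complex.sin z ≠ 0) (hz : Complex.abs z ≤ 1) :
    Complex.abs (z * Complex.cot z - 1 + z^2/3) ≤ 2 * Complex.abs z ^ 3 := by
  have hz0 : z ≠ 0 := by rintro rfl; simp at hs
  have key : z * Complex.cot z - 1 + z^2/3
      = (z * Complex.cos z - Complex.sin z + z^2/3 * Complex.sin z) / Complex.sin z := by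
    rw [Complex.cot_eq_cos_div_sin, eq_div_iff hs]; field_simp
  rw [key, map_div₀]
  -- numerator bound: h = z*Ec + (z²/3 - 1)*Es - z⁵/18 with Ec, Es remainders
  set Ec := Complex.cos z - (1 - z^2/2) with hEc
  set Es := Complex.sin z - (z - z^3/6) with hEs
  have hnum : z * Complex.cos z - Complex.sin z + z^2/3 * Complex.sin z
      = z * Ec + (z^2/3 - 1) * Es - z^5/18 := by rw [hEc, hEs]; ring
  have hc := my_cos_taylor z hz
  have hs' := my_sin_taylor z hz
  have habs : Complex.abs (z * Complex.cos z - Complex.sin z + z^2/3 * Complex.sin z)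
      ≤ Complex.abs z ^ 4 := by
    rw [hnum]
    have : Complex.abs (z * Ec + (z^2/3 - 1) * Es - z^5/18)
        ≤ Complex.abs z * Complex.abs Ec + (Complex.abs z ^ 2/3 + 1) * Complex.abs Es
          + Complex.abs z ^ 5 / 18 := by
      calc Complex.abs (z * Ec + (z^2/3 - 1) * Es - z^5/18)
          ≤ Complex.abs (z * Ec + (z^2/3 - 1) * Es) + Complex.abs (z^5/18) :=
            Complex.abs.sub_le_add _ _
        _ ≤ Complex.abs (z * Ec) + Complex.abs ((z^2/3 - 1) * Es) + Complex.abs (z^5/18) := by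
            have := Complex.abs.add_le (z * Ec) ((z^2/3 - 1) * Es); linarith
        _ ≤ _ := by
            have h18 : Complex.abs (z^5/18) = Complex.abs z ^ 5 / 18 := by
              rw [map_div₀, map_pow]; norm_num
            rw [map_mul, map_mul, h18]
            have h1 : Complex.abs (z^2/3 - 1) ≤ Complex.abs z ^ 2/3 + 1 := by
              calc Complex.abs (z^2/3 - 1) ≤ Complex.abs (z^2/3) + Complex.abs (1:ℂ) :=
                    Complex.abs.sub_le_add _ _
                _ = Complex.abs z ^ 2/3 + 1 := by rw [map_div₀, map_pow]; norm_num
            have h2 := mul_le_mul_of_nonneg_right h1 (Complex.abs.nonneg Es)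
            linarith
    refine this.trans ?_
    have ha := Complex.abs.nonneg z
    have p1 : Complex.abs z ^ 5 ≤ Complex.abs z ^ 4 :=
      pow_le_pow_of_le_one ha hz (by norm_num)
    have p2 : Complex.abs z * (Complex.abs z ^4 * (5/96)) ≤ Complex.abs z ^4 * (5/96) := by
      nlinarith [pow_nonneg ha 4]
    have p3 : Complex.abs z ^ 2 ≤ 1 := pow_le_one₀ ha hz
    have p4 : (Complex.abs z ^2/3 + 1) * Complex.abs Es ≤ (4/3) * (Complex.abs z ^4 * (5/96)) := by
      have := Complex.abs.nonneg Es
      nlinarith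
    nlinarith [pow_nonneg ha 4, mul_le_mul_of_nonneg_left hc ha]
  have hden := my_sin_lower z hz
  have hzpos : 0 < Complex.abs z := Complex.abs.pos hz0
  rw [div_le_iff₀ (lt_of_lt_of_le (half_pos hzpos) hden)]
  calc Complex.abs _ ≤ Complex.abs z ^ 4 := habs
    _ = (2 * Complex.abs z ^3) * (Complex.abs z / 2) := by ring
    _ ≤ _ := by
      have : (0:ℝ) ≤ 2 * Complex.abs z ^ 3 := by positivity
      exact mul_le_mul_of_nonneg_left hden this

lemma my_g'_small (z : ℂ) (hs : Complex.sin z ≠ 0) (hz : Complex.abs z ≤ 1/2) :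
    Complex.abs (Complex.cot z - z / Complex.sin z ^ 2 + 2*z/3) ≤ 8 * Complex.abs z ^ 2 := by
  have hz1 : Complex.abs z ≤ 1 := by linarith
  have hz0 : z ≠ 0 := by rintro rfl; simp at hs
  have key : Complex.cot z - z / Complex.sin z ^ 2 + 2*z/3
      = (Complex.cos z * Complex.sin z - z + 2*z/3 * Complex.sin z ^ 2) / Complex.sin z ^ 2 := by
    rw [Complex.cot_eq_cos_div_sin, eq_div_iff (pow_ne_zero 2 hs)]
    field_simp
  set d := Complex.sin z - z with hd_def
  set E := Complex.sin (2*z) - (2*z - (2*z)^3/6) with hE_def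
  have h2z : Complex.abs (2*z) ≤ 1 := by
    rw [map_mul]; simp only [Complex.abs_two]; linarith
  have hnum : Complex.cos z * Complex.sin z - z + 2*z/3 * Complex.sin z ^ 2
      = E/2 + 2*z/3*(2*z*d + d^2) := by
    have h2 : Complex.sin (2*z) = 2 * Complex.sin z * Complex.cos z := Complex.sin_two_mul z
    rw [hE_def, hd_def, h2]; ring
  have habs2z : Complex.abs (2*z) = 2 * Complex.abs z := by
    rw [map_mul]; simp [Complex.abs_two]
  have habsE : Complex.abs E ≤ (5/6) * Complex.abs z ^ 4 := by
    have h := my_sin_taylor (2*z) h2z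
    rw [habs2z] at h
    nlinarith [pow_nonneg (Complex.abs.nonneg z) 4]
  have habsd : Complex.abs d ≤ Complex.abs z ^ 3 / 4 := my_sin_sub_self z hz1
  set a := Complex.abs z with ha_def
  set D := Complex.abs d with hD_def
  have hN : Complex.abs (Complex.cos z * Complex.sin z - z + 2*z/3 * Complex.sin z ^ 2)
      ≤ 2 * a ^ 4 := by
    rw [hnum]
    have t1 : Complex.abs (2*z*d + d^2) ≤ 2*a*D + D^2 := by
      calc Complex.abs (2*z*d + d^2) ≤ Complex.abs (2*z*d) + Complex.abs (d^2) :=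
            Complex.abs.add_le _ _
        _ = 2*a*D + D^2 := by rw [map_mul, map_mul, map_pow, Complex.abs_two]
    have t2 : Complex.abs (2*z/3*(2*z*d + d^2)) = (2*a/3) * Complex.abs (2*z*d + d^2) := by
      rw [map_mul, map_div₀, map_mul, Complex.abs_two]
      norm_num [ha_def]
    have t3 : Complex.abs (E/2 + 2*z/3*(2*z*d + d^2))
        ≤ Complex.abs E / 2 + (2*a/3) * (2*a*D + D^2) := by
      calc Complex.abs (E/2 + 2*z/3*(2*z*d + d^2))
          ≤ Complex.abs (E/2) + Complex.abs (2*z/3*(2*z*d + d^2)) := Complex.abs.add_le _ _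
        _ ≤ Complex.abs E / 2 + (2*a/3) * (2*a*D + D^2) := by
            rw [map_div₀, t2]
            simp only [Complex.abs_two]
            have ha0 : 0 ≤ a := Complex.abs.nonneg z
            have := mul_le_mul_of_nonneg_left t1 (by positivity : (0:ℝ) ≤ 2*a/3)
            linarith
    refine t3.trans ?_
    have ha0 : 0 ≤ a := Complex.abs.nonneg z
    have hD0 : 0 ≤ D := Complex.abs.nonneg d
    nlinarith [mul_le_mul_of_nonneg_left habsd (by positivity : (0:ℝ) ≤ (4/3)*a^2),
      mul_le_mul habsd habsd hD0 (by positivity : (0:ℝ) ≤ a^3/4),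
      pow_le_pow_of_le_one ha0 hz1 (show 5 ≤ 7 by norm_num),
      pow_le_pow_of_le_one ha0 hz1 (show 4 ≤ 5 by norm_num),
      pow_le_pow_of_le_one ha0 hz1 (show 4 ≤ 7 by norm_num),
      pow_nonneg ha0 4]
  have hden := my_sin_lower z hz1
  have hzpos : 0 < a := Complex.abs.pos hz0
  rw [key, map_div₀, map_pow]
  rw [div_le_iff₀ (pow_pos (Complex.abs.pos hs) 2)]
  calc Complex.abs _ ≤ 2 * a ^ 4 := hN
    _ = (8 * a^2) * ((a/2)^2) := by ring
    _ ≤ (8 * a^2) * Complex.abs (Complex.sin z) ^ 2 := by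
        have h1 : (a/2)^2 ≤ Complex.abs (Complex.sin z)^2 := by
          have := my_sin_lower z hz1
          nlinarith [Complex.abs.nonneg (Complex.sin z)]
        exact mul_le_mul_of_nonneg_left h1 (by positivity)

lemma my_sin_ne_zero (z : ℂ) (h : z.im ≠ 0) : Complex.sin z ≠ 0 := by
  intro h0
  rcases Complex.sin_eq_zero_iff.1 h0 with ⟨k, hk⟩
  apply h; rw [hk]; simp

lemma my_sin_lower_im (z : ℂ) :
    (Real.exp z.im - Real.exp (-z.im))/2 ≤ Complex.abs (Complex.sin z) := by
  have h1 : Complex.abs (Complex.sin z)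
      = Complex.abs (Complex.exp (-z*I) - Complex.exp (z*I)) / 2 := by
    rw [Complex.sin, map_div₀, map_mul]
    simp
  have e1 : Complex.abs (Complex.exp (-z*I)) = Real.exp z.im := by
    rw [Complex.abs_exp]; congr 1; simp
  have e2 : Complex.abs (Complex.exp (z*I)) = Real.exp (-z.im) := by
    rw [Complex.abs_exp]; congr 1; simp
  have tri : Complex.abs (Complex.exp (-z*I))
      ≤ Complex.abs (Complex.exp (-z*I) - Complex.exp (z*I)) + Complex.abs (Complex.exp (z*I)) := by
    calc Complex.abs (Complex.exp (-z*I))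
        = Complex.abs ((Complex.exp (-z*I) - Complex.exp (z*I)) + Complex.exp (z*I)) := by ring_nf
      _ ≤ _ := Complex.abs.add_le _ _
  rw [h1]; rw [e1, e2] at tri; linarith

lemma my_cos_upper (z : ℂ) (h : 0 ≤ z.im) : Complex.abs (Complex.cos z) ≤ Real.exp z.im := by
  have e1 : Complex.abs (Complex.exp (-z*I)) = Real.exp z.im := by
    rw [Complex.abs_exp]; congr 1; simp
  have e2 : Complex.abs (Complex.exp (z*I)) = Real.exp (-z.im) := by
    rw [Complex.abs_exp]; congr 1; simp
  have hle : Real.exp (-z.im) ≤ Real.exp z.im := Real.exp_le_exp.2 (by linarith)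
  calc Complex.abs (Complex.cos z)
      = Complex.abs (Complex.exp (z*I) + Complex.exp (-z*I)) / 2 := by
        rw [Complex.cos, map_div₀]; norm_num
    _ ≤ (Complex.abs (Complex.exp (z*I)) + Complex.abs (Complex.exp (-z*I))) / 2 := by
        have := Complex.abs.add_le (Complex.exp (z*I)) (Complex.exp (-z*I)); linarith
    _ ≤ Real.exp z.im := by rw [e1, e2]; linarith

lemma my_cot_upper (z : ℂ) (y₀ : ℝ) (h0 : 0 < y₀) (h : y₀ ≤ z.im) :
    Complex.abs (Complex.cot z) ≤ 2 / (1 - Real.exp (-(2*y₀))) := by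
  have him : 0 < z.im := lt_of_lt_of_le h0 h
  have hsl := my_sin_lower_im z
  have hrw : Real.exp (-z.im) = Real.exp z.im * Real.exp (-(2*z.im)) := by
    rw [← Real.exp_add]; ring_nf
  have h2 : Real.exp (-(2*z.im)) ≤ Real.exp (-(2*y₀)) := Real.exp_le_exp.2 (by linarith)
  have hden_pos : 0 < 1 - Real.exp (-(2*y₀)) := by
    have : Real.exp (-(2*y₀)) < 1 := Real.exp_lt_one_iff.2 (by linarith)
    linarith
  have hexp_pos := Real.exp_pos z.im
  have key : Real.exp z.im * (1 - Real.exp (-(2*y₀))) / 2 ≤ Complex.abs (Complex.sin z) := by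
    refine le_trans ?_ hsl
    rw [hrw]
    nlinarith
  have hs_pos : 0 < Complex.abs (Complex.sin z) := by
    refine lt_of_lt_of_le ?_ key
    positivity
  rw [Complex.cot_eq_cos_div_sin, map_div₀, div_le_div_iff₀ hs_pos hden_pos]
  have hcu := my_cos_upper z him.le
  nlinarith


lemma w_im (β : ℂ) (t : ℝ) :
    (2 * (Real.sqrt Real.pi : ℂ) * β * (t:ℂ)).im = 2 * Real.sqrt Real.pi * β.im * t := by
  simp [Complex.mul_im, Complex.mul_re]

lemma w_abs (β : ℂ) {t : ℝ} (ht : 0 ≤ t) :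
    Complex.abs (2 * (Real.sqrt Real.pi : ℂ) * β * (t:ℂ))
      = 2 * Real.sqrt Real.pi * Complex.abs β * t := by
  rw [map_mul, map_mul, map_mul, Complex.abs_two, Complex.abs_ofReal, Complex.abs_ofReal,
    _root_.abs_of_nonneg (Real.sqrt_nonneg _), _root_.abs_of_nonneg ht]

lemma phi_norm_eq (β : ℂ) {t : ℝ} (ht : 0 < t) :
    ‖phiIntegrand β t‖ = Real.exp (-t) / t^3 *
      Complex.abs ((2*(Real.sqrt Real.pi:ℂ)*β*(t:ℂ)) * Complex.cot (2*(Real.sqrt Real.pi:ℂ)*β*(t:ℂ))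
        - 1 + (2*(Real.sqrt Real.pi:ℂ)*β*(t:ℂ))^2/3) := by
  have hsq : ((Real.sqrt Real.pi : ℝ):ℂ)^2 = (Real.pi:ℂ) := by
    rw [← Complex.ofReal_pow, Real.sq_sqrt Real.pi_pos.le]
  have hrw : phiIntegrand β t = (Complex.exp (-(t:ℂ))/(t:ℂ)^3) *
      ((2*(Real.sqrt Real.pi:ℂ)*β*(t:ℂ)) * Complex.cot (2*(Real.sqrt Real.pi:ℂ)*β*(t:ℂ))
        - 1 + (2*(Real.sqrt Real.pi:ℂ)*β*(t:ℂ))^2/3) := by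
    rw [phiIntegrand]
    congr 1
    linear_combination (-4/3*β^2*(t:ℂ)^2) * hsq
  rw [hrw, Complex.norm_eq_abs, map_mul, map_div₀, Complex.abs_exp, map_pow, Complex.abs_ofReal,
    _root_.abs_of_pos ht]
  norm_num

lemma phi_contOn (β : ℂ) (him : 0 < β.im) :
    ContinuousOn (fun t : ℝ => phiIntegrand β t) (Set.Ioi 0) := by
  have hrw : ∀ t : ℝ, phiIntegrand β t = (Complex.exp (-(t:ℂ)) / (t:ℂ)^3) *
      ((2*(Real.sqrt Real.pi:ℂ)*β*(t:ℂ)) *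
        (Complex.cos (2*(Real.sqrt Real.pi:ℂ)*β*(t:ℂ)) / Complex.sin (2*(Real.sqrt Real.pi:ℂ)*β*(t:ℂ)))
        - 1 + 4*(Real.pi:ℂ)*β^2*(t:ℂ)^2/3) := by
    intro t; rw [phiIntegrand, Complex.cot_eq_cos_div_sin]
  simp only [hrw]
  have hct : Continuous (fun t : ℝ => (t:ℂ)) := Complex.continuous_ofReal
  have hw : Continuous (fun t : ℝ => 2*(Real.sqrt Real.pi:ℂ)*β*(t:ℂ)) := continuous_const.mul hct
  have hsin_ne : ∀ t ∈ Set.Ioi (0:ℝ), Complex.sin (2*(Real.sqrt Real.pi:ℂ)*β*(t:ℂ)) ≠ 0 := by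
    intro t ht
    apply my_sin_ne_zero
    rw [w_im]
    have hsp : 0 < Real.sqrt Real.pi := Real.sqrt_pos.2 Real.pi_pos
    have : (0:ℝ) < t := ht
    positivity
  apply ContinuousOn.mul
  · apply ContinuousOn.div (hct.neg.cexp.continuousOn) ((hct.pow 3).continuousOn)
    intro t ht
    exact pow_ne_zero 3 (Complex.ofReal_ne_zero.2 (ne_of_gt ht))
  · apply ContinuousOn.add
    apply ContinuousOn.sub
    · exact hw.continuousOn.mul (ContinuousOn.div ((Complex.continuous_cos.comp hw).continuousOn)
        ((Complex.continuous_sin.comp hw).continuousOn) hsin_ne)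
    · exact continuousOn_const
    · exact (continuous_const.mul (hct.pow 2)).continuousOn.div_const _

lemma my_integrable {β : ℂ} (him : 0 < β.im) :
    MeasureTheory.IntegrableOn (fun t : ℝ => phiIntegrand β t) (Set.Ioi 0) := by
  have hsp : 0 < Real.sqrt Real.pi := Real.sqrt_pos.2 Real.pi_pos
  have hβ0 : β ≠ 0 := fun h => by simp [h] at him
  have habsβ : 0 < Complex.abs β := Complex.abs.pos hβ0
  set c : ℝ := 2 * Real.sqrt Real.pi * Complex.abs β with hc_def
  have hc : 0 < c := by rw [hc_def]; positivity
  clear_value c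
  set a : ℝ := min 1 (1/c) with ha_def
  have ha : 0 < a := lt_min one_pos (by positivity)
  have ha1 : a ≤ 1 := min_le_left _ _
  have hac : c * a ≤ 1 := by
    have : a ≤ 1/c := min_le_right _ _
    rw [mul_comm]
    exact (le_div_iff₀ hc).mp this
  clear_value a
  have hsplit : Set.Ioi (0:ℝ) = Set.Ioc 0 a ∪ Set.Ioi a := (Set.Ioc_union_Ioi_eq_Ioi ha.le).symm
  rw [hsplit]
  have hcont := phi_contOn β him
  apply MeasureTheory.IntegrableOn.union
  · -- small t piece : bounded by 2c³
    have hmeas : AEStronglyMeasurable (fun t : ℝ => phiIntegrand β t)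
        (volume.restrict (Set.Ioc 0 a)) :=
      (hcont.mono Set.Ioc_subset_Ioi_self).aestronglyMeasurable measurableSet_Ioc
    refine Integrable.mono' (g := fun _ : ℝ => 2 * c^3)
      (integrableOn_const measure_Ioc_lt_top.ne) hmeas ?_
    filter_upwards [ae_restrict_mem measurableSet_Ioc] with t ht
    obtain ⟨ht0, hta⟩ := ht
    have hwabs : Complex.abs (2*(Real.sqrt Real.pi:ℂ)*β*(t:ℂ)) = c * t := by
      rw [w_abs β ht0.le, hc_def]
    have hwim : 0 < (2*(Real.sqrt Real.pi:ℂ)*β*(t:ℂ)).im := by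
      rw [w_im]; positivity
    have hsin := my_sin_ne_zero _ (ne_of_gt hwim)
    have hw1 : Complex.abs (2*(Real.sqrt Real.pi:ℂ)*β*(t:ℂ)) ≤ 1 := by
      rw [hwabs]
      calc c * t ≤ c * a := by nlinarith
        _ ≤ 1 := hac
    have hbound := my_g_small _ hsin hw1
    rw [hwabs] at hbound
    rw [phi_norm_eq β ht0]
    have hexp : Real.exp (-t) ≤ 1 := Real.exp_le_one_iff.2 (by linarith)
    calc Real.exp (-t) / t^3 * Complex.abs _ ≤ (1/t^3) * (2 * (c*t)^3) := by
          apply mul_le_mul _ hbound (Complex.abs.nonneg _) (by positivity)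
          gcongr
      _ = 2 * c^3 := by field_simp
  · -- tail piece : bounded by C * exp(-t)
    set y₀ : ℝ := 2 * Real.sqrt Real.pi * β.im * a with hy₀_def
    have hy₀ : 0 < y₀ := by positivity
    clear_value y₀
    set M : ℝ := 2 / (1 - Real.exp (-(2*y₀))) with hM_def
    have hM : 0 < M := by
      have h1 : Real.exp (-(2*y₀)) < 1 := Real.exp_lt_one_iff.2 (by linarith)
      have h2 : 0 < 1 - Real.exp (-(2*y₀)) := by linarith
      rw [hM_def]; positivity
    clear_value M
    set C : ℝ := (c*M + 1 + c^2/3)/a^3 with hC_def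
    clear_value C
    have hmeas : AEStronglyMeasurable (fun t : ℝ => phiIntegrand β t)
        (volume.restrict (Set.Ioi a)) :=
      (hcont.mono (Set.Ioi_subset_Ioi ha.le)).aestronglyMeasurable measurableSet_Ioi
    have hint : IntegrableOn (fun t : ℝ => C * Real.exp (-t)) (Set.Ioi a) := by
      have h0 := (exp_neg_integrableOn_Ioi a (zero_lt_one)).const_mul C
      simpa [IntegrableOn] using h0
    refine Integrable.mono' hint hmeas ?_
    filter_upwards [ae_restrict_mem measurableSet_Ioi] with t ht
    have hat : a < t := ht
    have ht0 : 0 < t := lt_trans ha ht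
    have hwabs : Complex.abs (2*(Real.sqrt Real.pi:ℂ)*β*(t:ℂ)) = c * t := by
      rw [w_abs β ht0.le, hc_def]
    have hwim : y₀ ≤ (2*(Real.sqrt Real.pi:ℂ)*β*(t:ℂ)).im := by
      rw [w_im, hy₀_def]
      nlinarith [hat, him, hsp]
    have hsin := my_sin_ne_zero _ (ne_of_gt (lt_of_lt_of_le hy₀ hwim))
    have hcot := my_cot_upper _ y₀ hy₀ hwim
    rw [phi_norm_eq β ht0]
    have habs_inner : Complex.abs ((2*(Real.sqrt Real.pi:ℂ)*β*(t:ℂ)) *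
        Complex.cot (2*(Real.sqrt Real.pi:ℂ)*β*(t:ℂ)) - 1
        + (2*(Real.sqrt Real.pi:ℂ)*β*(t:ℂ))^2/3) ≤ c*t*M + 1 + c^2*t^2/3 := by
      calc Complex.abs _ ≤ Complex.abs ((2*(Real.sqrt Real.pi:ℂ)*β*(t:ℂ)) *
            Complex.cot (2*(Real.sqrt Real.pi:ℂ)*β*(t:ℂ)) - 1)
            + Complex.abs ((2*(Real.sqrt Real.pi:ℂ)*β*(t:ℂ))^2/3) := Complex.abs.add_le _ _
        _ ≤ (Complex.abs ((2*(Real.sqrt Real.pi:ℂ)*β*(t:ℂ)) *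
            Complex.cot (2*(Real.sqrt Real.pi:ℂ)*β*(t:ℂ))) + 1)
            + Complex.abs ((2*(Real.sqrt Real.pi:ℂ)*β*(t:ℂ))^2/3) := by
            have := Complex.abs.sub_le_add ((2*(Real.sqrt Real.pi:ℂ)*β*(t:ℂ)) *
              Complex.cot (2*(Real.sqrt Real.pi:ℂ)*β*(t:ℂ))) 1
            simp only [map_one] at this
            linarith
        _ ≤ c*t*M + 1 + c^2*t^2/3 := by
            rw [map_mul, hwabs]
            have h2 : Complex.abs ((2*(Real.sqrt Real.pi:ℂ)*β*(t:ℂ))^2/3) = (c*t)^2/3 := by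
              rw [map_div₀, map_pow, hwabs]; norm_num
            rw [h2]
            have := mul_le_mul_of_nonneg_left hcot (by positivity : (0:ℝ) ≤ c*t)
            rw [← hM_def] at this
            nlinarith
    have hfrac : Real.exp (-t)/t^3 * (c*t*M + 1 + c^2*t^2/3) ≤ C * Real.exp (-t) := by
      have hkey : (c*t*M + 1 + c^2*t^2/3) / t^3 ≤ C := by
        clear hcot habs_inner hsin hwabs hwim hmeas hint hcont hsplit him hβ0 habsβ
        rw [div_le_iff₀ (by positivity : (0:ℝ) < t^3), hC_def, div_mul_eq_mul_div,
          le_div_iff₀ (by positivity : (0:ℝ) < a^3)]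
        have haa : a^3 ≤ a^2 := by nlinarith [sq_nonneg a]
        have haa1 : a^2 ≤ a := by nlinarith
        have hsq2 : a^2 ≤ t^2 := by nlinarith
        have h23 : a^3 ≤ t^2 := haa.trans hsq2
        have h2t : a^3 ≤ t := (haa.trans haa1).trans hat.le
        have e1 : a^3 * (c*t*M) ≤ c*M*t^3 := by
          nlinarith [mul_le_mul_of_nonneg_right h23 (show (0:ℝ) ≤ c*t*M by positivity)]
        have e2 : a^3 ≤ t^3 := pow_le_pow_left₀ ha.le hat.le 3
        have e3 : a^3 * (c^2*t^2/3) ≤ c^2/3*t^3 := by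
          nlinarith [mul_le_mul_of_nonneg_right h2t (show (0:ℝ) ≤ c^2*t^2/3 by positivity)]
        nlinarith
      calc Real.exp (-t)/t^3 * (c*t*M + 1 + c^2*t^2/3)
          = ((c*t*M + 1 + c^2*t^2/3)/t^3) * Real.exp (-t) := by ring
        _ ≤ C * Real.exp (-t) :=
          mul_le_mul_of_nonneg_right hkey (Real.exp_pos _).le
    calc Real.exp (-t)/t^3 * Complex.abs _ ≤ Real.exp (-t)/t^3 * (c*t*M + 1 + c^2*t^2/3) :=
          mul_le_mul_of_nonneg_left habs_inner (by positivity)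
      _ ≤ C * Real.exp (-t) := hfrac


noncomputable def phiDeriv (β : ℂ) (t : ℝ) : ℂ :=
  (Complex.exp (-(t : ℂ)) / (t : ℂ) ^ 3) * (2 * (Real.sqrt Real.pi : ℂ) * (t : ℂ)) *
    (Complex.cot (2 * (Real.sqrt Real.pi : ℂ) * β * (t : ℂ))
      - (2 * (Real.sqrt Real.pi : ℂ) * β * (t : ℂ)) /
          Complex.sin (2 * (Real.sqrt Real.pi : ℂ) * β * (t : ℂ)) ^ 2
      + 2 * (2 * (Real.sqrt Real.pi : ℂ) * β * (t : ℂ)) / 3)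

lemma phi_hasDerivAt (β : ℂ) {t : ℝ} (ht : 0 < t) (him : 0 < β.im) :
    HasDerivAt (fun b => phiIntegrand b t) (phiDeriv β t) β := by
  have hsp : 0 < Real.sqrt Real.pi := Real.sqrt_pos.2 Real.pi_pos
  set q : ℂ := 2 * (Real.sqrt Real.pi : ℂ) with hq_def
  have hwim : (q * β * (t:ℂ)).im = 2 * Real.sqrt Real.pi * β.im * t := w_im β t
  have hsin : Complex.sin (q * β * (t:ℂ)) ≠ 0 := by
    apply my_sin_ne_zero; rw [hwim]; positivity
  set w : ℂ := q * β * (t:ℂ) with hw_def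
  have hw : HasDerivAt (fun b : ℂ => q * b * (t:ℂ)) (q * (t:ℂ)) β := by
    have h1 : HasDerivAt (fun b : ℂ => q * b) q β := (hasDerivAt_id β).const_mul q |>.congr_deriv (by ring)
    simpa using h1.mul_const (t:ℂ)
  have hcos : HasDerivAt (fun b : ℂ => Complex.cos (q * b * (t:ℂ)))
      (-Complex.sin (q * β * (t:ℂ)) * (q * (t:ℂ))) β := hw.ccos
  have hsinD : HasDerivAt (fun b : ℂ => Complex.sin (q * b * (t:ℂ)))
      (Complex.cos (q * β * (t:ℂ)) * (q * (t:ℂ))) β := hw.csin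
  have hnum : HasDerivAt (fun b : ℂ => (q * b * (t:ℂ)) * Complex.cos (q * b * (t:ℂ)))
      (q * (t:ℂ) * Complex.cos (q * β * (t:ℂ))
        + (q * β * (t:ℂ)) * (-Complex.sin (q * β * (t:ℂ)) * (q * (t:ℂ)))) β := hw.mul hcos
  have hdiv := hnum.div hsinD hsin
  have hpow : HasDerivAt (fun b : ℂ => 4 * (Real.pi:ℂ) * b^2 * (t:ℂ)^2 / 3)
      (4 * (Real.pi:ℂ) * (2*β) * (t:ℂ)^2 / 3) β := by
    have h1 : HasDerivAt (fun b : ℂ => b^2) (2*β) β := by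
      simpa using hasDerivAt_pow 2 β
    have h2 := ((h1.const_mul (4 * (Real.pi:ℂ))).mul_const ((t:ℂ)^2)).div_const (3:ℂ)
    convert h2 using 1
  have htot := (((hdiv.sub_const 1).add hpow).const_mul (Complex.exp (-(t:ℂ)) / (t:ℂ)^3))
  have heq : (fun b => phiIntegrand b t)
      = fun b => (Complex.exp (-(t:ℂ)) / (t:ℂ)^3) *
        ((q * b * (t:ℂ)) * Complex.cos (q * b * (t:ℂ)) / Complex.sin (q * b * (t:ℂ)) - 1
          + 4 * (Real.pi:ℂ) * b^2 * (t:ℂ)^2 / 3) := by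
    funext b
    rw [phiIntegrand, Complex.cot_eq_cos_div_sin, hq_def]
    ring
  rw [heq]
  have hsq : ((Real.sqrt Real.pi : ℝ):ℂ)^2 = (Real.pi:ℂ) := by
    rw [← Complex.ofReal_pow, Real.sq_sqrt Real.pi_pos.le]
  have pyth := Complex.sin_sq_add_cos_sq w
  have e1 : ((q * (t:ℂ) * Complex.cos w + w * (-Complex.sin w * (q * (t:ℂ)))) * Complex.sin w -
        w * Complex.cos w * (Complex.cos w * (q * (t:ℂ)))) / Complex.sin w ^ 2
      = q * (t:ℂ) * (Complex.cos w / Complex.sin w - w / Complex.sin w ^ 2) := by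
    field_simp
    linear_combination (-(q * (t:ℂ) * w) * Complex.sin w ^ 3
      + 4 * ((Real.sqrt Real.pi : ℝ):ℂ)^2 * (t:ℂ)^2 * β * (Complex.sin w ^ 3 - 1)) * pyth
  have hp : (4 : ℂ) * Real.pi * (2*β) * (t:ℂ)^2/3 = (q*(t:ℂ)) * (2*w/3) := by
    rw [hw_def, hq_def]
    linear_combination (-8/3*β*(t:ℂ)^2) * hsq
  rw [e1, hp] at htot
  have final : phiDeriv β t = Complex.exp (-(t:ℂ)) / (t:ℂ)^3 *
      (q * (t:ℂ) * (Complex.cos w / Complex.sin w - w / Complex.sin w ^ 2) + q * (t:ℂ) * (2*w/3)) := by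
    rw [phiDeriv, Complex.cot_eq_cos_div_sin, hw_def, hq_def]
    ring
  rw [final]
  exact htot

lemma phiDeriv_norm_eq (β : ℂ) {t : ℝ} (ht : 0 < t) :
    ‖phiDeriv β t‖ = Real.exp (-t) / t^3 * (2 * Real.sqrt Real.pi * t) *
      Complex.abs (Complex.cot (2*(Real.sqrt Real.pi:ℂ)*β*(t:ℂ))
        - (2*(Real.sqrt Real.pi:ℂ)*β*(t:ℂ)) / Complex.sin (2*(Real.sqrt Real.pi:ℂ)*β*(t:ℂ)) ^ 2
        + 2*(2*(Real.sqrt Real.pi:ℂ)*β*(t:ℂ))/3) := by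
  rw [phiDeriv, Complex.norm_eq_abs, map_mul, map_mul, map_div₀, Complex.abs_exp, map_pow,
    Complex.abs_ofReal, _root_.abs_of_pos ht, map_mul, map_mul, Complex.abs_two,
    Complex.abs_ofReal, Complex.abs_ofReal, _root_.abs_of_nonneg (Real.sqrt_nonneg _),
    _root_.abs_of_pos ht]
  norm_num

lemma phiDeriv_contOn (β : ℂ) (him : 0 < β.im) :
    ContinuousOn (fun t : ℝ => phiDeriv β t) (Set.Ioi 0) := by
  have hrw : ∀ t : ℝ, phiDeriv β t = (Complex.exp (-(t:ℂ)) / (t:ℂ)^3) * (2*(Real.sqrt Real.pi:ℂ)*(t:ℂ)) *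
      (Complex.cos (2*(Real.sqrt Real.pi:ℂ)*β*(t:ℂ)) / Complex.sin (2*(Real.sqrt Real.pi:ℂ)*β*(t:ℂ))
        - (2*(Real.sqrt Real.pi:ℂ)*β*(t:ℂ)) / Complex.sin (2*(Real.sqrt Real.pi:ℂ)*β*(t:ℂ)) ^ 2
        + 2*(2*(Real.sqrt Real.pi:ℂ)*β*(t:ℂ))/3) := by
    intro t; rw [phiDeriv, Complex.cot_eq_cos_div_sin]
  simp only [hrw]
  have hct : Continuous (fun t : ℝ => (t:ℂ)) := Complex.continuous_ofReal
  have hw : Continuous (fun t : ℝ => 2*(Real.sqrt Real.pi:ℂ)*β*(t:ℂ)) := continuous_const.mul hct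
  have hsin_ne : ∀ t ∈ Set.Ioi (0:ℝ), Complex.sin (2*(Real.sqrt Real.pi:ℂ)*β*(t:ℂ)) ≠ 0 := by
    intro t ht
    apply my_sin_ne_zero
    rw [w_im]
    have hsp : 0 < Real.sqrt Real.pi := Real.sqrt_pos.2 Real.pi_pos
    have : (0:ℝ) < t := ht
    positivity
  apply ContinuousOn.mul
  · apply ContinuousOn.mul
    · apply ContinuousOn.div (hct.neg.cexp.continuousOn) ((hct.pow 3).continuousOn)
      intro t ht
      exact pow_ne_zero 3 (Complex.ofReal_ne_zero.2 (ne_of_gt ht))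
    · exact (continuous_const.mul hct).continuousOn
  · apply ContinuousOn.add
    apply ContinuousOn.sub
    · exact ContinuousOn.div ((Complex.continuous_cos.comp hw).continuousOn)
        ((Complex.continuous_sin.comp hw).continuousOn) hsin_ne
    · exact ContinuousOn.div hw.continuousOn
        (((Complex.continuous_sin.comp hw).pow 2).continuousOn)
        (fun t ht => pow_ne_zero 2 (hsin_ne t ht))
    · exact ((continuous_const.mul hw).continuousOn).div_const _

set_option maxHeartbeats 2000000 in
lemma phi_hasDerivAt_integral (β₀ : ℂ) (him : 0 < β₀.im) :
    HasDerivAt (fun β : ℂ => ∫ t in Set.Ioi (0:ℝ), phiIntegrand β t)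
      (∫ t in Set.Ioi (0:ℝ), phiDeriv β₀ t) β₀ := by
  have hsp : 0 < Real.sqrt Real.pi := Real.sqrt_pos.2 Real.pi_pos
  set ε : ℝ := β₀.im/2 with hε_def
  have hε : 0 < ε := half_pos him
  set R : ℝ := Complex.abs β₀ + β₀.im/2 with hR_def
  have hR : 0 < R := add_pos_of_nonneg_of_pos (Complex.abs.nonneg _) hε
  set m : ℝ := β₀.im/2 with hm_def
  have hm : 0 < m := hε
  have hball : ∀ β ∈ Metric.ball β₀ ε, Complex.abs β ≤ R ∧ m ≤ β.im := by
    intro β hβ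
    have hd : Complex.abs (β - β₀) < ε := by rwa [Metric.mem_ball, Complex.dist_eq] at hβ
    have him2 : |(β - β₀).im| ≤ Complex.abs (β - β₀) := Complex.abs_im_le_abs _
    have hime : (β - β₀).im = β.im - β₀.im := by simp
    constructor
    · calc Complex.abs β = Complex.abs (β₀ + (β - β₀)) := by ring_nf
        _ ≤ Complex.abs β₀ + Complex.abs (β - β₀) := Complex.abs.add_le _ _
        _ ≤ R := by rw [hR_def]; linarith [hd.le]
    · rw [hime] at him2
      have := (abs_le.1 him2).1
      rw [hm_def]; linarith [hd.le]
  clear_value R m ε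
  set c : ℝ := 2 * Real.sqrt Real.pi with hc_def
  have hc : 0 < c := by rw [hc_def]; positivity
  clear_value c
  set a : ℝ := min 1 (1/(2*c*R)) with ha_def
  have ha : 0 < a := lt_min one_pos (by positivity)
  have ha1 : a ≤ 1 := min_le_left _ _
  have hcra : c*R*a ≤ 1/2 := by
    have h1 : a ≤ 1/(2*c*R) := min_le_right _ _
    have h2 : 0 < 2*c*R := by positivity
    calc c*R*a ≤ c*R*(1/(2*c*R)) := by
          exact mul_le_mul_of_nonneg_left h1 (by positivity)
      _ = 1/2 := by field_simp
  clear_value a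
  set y₀ : ℝ := c*m*a with hy₀_def
  have hy₀ : 0 < y₀ := by rw [hy₀_def]; positivity
  clear_value y₀
  set s₁ : ℝ := (Real.exp y₀ - Real.exp (-y₀))/2 with hs₁_def
  have hs₁ : 0 < s₁ := by
    have : Real.exp (-y₀) < Real.exp y₀ := Real.exp_lt_exp.2 (by linarith)
    rw [hs₁_def]; linarith
  clear_value s₁
  set M : ℝ := 2/(1 - Real.exp (-(2*y₀))) with hM_def
  have hM : 0 < M := by
    have h1 : Real.exp (-(2*y₀)) < 1 := Real.exp_lt_one_iff.2 (by linarith)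
    have h2 : 0 < 1 - Real.exp (-(2*y₀)) := by linarith
    rw [hM_def]; positivity
  clear_value M
  set B₀ : ℝ := 8*c^3*R^2 with hB₀_def
  set B₁ : ℝ := c*M/a^2 + c^2*R*(1/s₁^2 + 2/3)/a with hB₁_def
  clear_value B₀ B₁
  set bound : ℝ → ℝ := fun t => if t ≤ a then B₀ else B₁ * Real.exp (-t) with hbound_def
  clear_value bound
  have himball : ∀ β ∈ Metric.ball β₀ ε, 0 < β.im :=
    fun β hβ => lt_of_lt_of_le hm (hball β hβ).2
  refine (hasDerivAt_integral_of_dominated_loc_of_deriv_le (F' := fun β t => phiDeriv β t)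
      (bound := bound) (Metric.ball_mem_nhds β₀ hε) ?_ (my_integrable him) ?_ ?_ ?_ ?_).2
  · exact Filter.eventually_of_mem (Metric.ball_mem_nhds β₀ hε)
      (fun β hβ => ((phi_contOn β (himball β hβ)).aestronglyMeasurable measurableSet_Ioi))
  · exact (phiDeriv_contOn β₀ him).aestronglyMeasurable measurableSet_Ioi
  · -- uniform bound
    filter_upwards [ae_restrict_mem measurableSet_Ioi] with t ht
    intro β hβ
    have ht0 : (0:ℝ) < t := ht
    obtain ⟨habsβ, himβ⟩ := hball β hβ
    have himβ0 : 0 < β.im := lt_of_lt_of_le hm himβ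
    have hwabs : Complex.abs (2*(Real.sqrt Real.pi:ℂ)*β*(t:ℂ)) = c * Complex.abs β * t := by
      rw [w_abs β ht0.le, hc_def]
    have hwim : (2*(Real.sqrt Real.pi:ℂ)*β*(t:ℂ)).im = c * β.im * t := by
      rw [w_im, hc_def]
    have hsin : Complex.sin (2*(Real.sqrt Real.pi:ℂ)*β*(t:ℂ)) ≠ 0 := by
      apply my_sin_ne_zero; rw [hwim]; positivity
    have hu1 : Real.exp (-t) ≤ 1 := Real.exp_le_one_iff.2 (by linarith)
    have hu0 : 0 < Real.exp (-t) := Real.exp_pos _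
    rw [phiDeriv_norm_eq β ht0, ← hc_def]
    by_cases hta : t ≤ a
    · simp only [hbound_def]
      rw [if_pos hta]
      have hwhalf : Complex.abs (2*(Real.sqrt Real.pi:ℂ)*β*(t:ℂ)) ≤ 1/2 := by
        rw [hwabs]
        nlinarith [Complex.abs.nonneg β,
          mul_le_mul_of_nonneg_left habsβ (by positivity : (0:ℝ) ≤ c*t),
          mul_le_mul_of_nonneg_left hta (by positivity : (0:ℝ) ≤ c*R)]
      have hg := my_g'_small _ hsin hwhalf
      have hg2 : Complex.abs (Complex.cot (2*(Real.sqrt Real.pi:ℂ)*β*(t:ℂ))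
          - (2*(Real.sqrt Real.pi:ℂ)*β*(t:ℂ)) / Complex.sin (2*(Real.sqrt Real.pi:ℂ)*β*(t:ℂ)) ^ 2
          + 2*(2*(Real.sqrt Real.pi:ℂ)*β*(t:ℂ))/3) ≤ 8*(c*R*t)^2 := by
        refine hg.trans ?_
        rw [hwabs]
        gcongr
      calc Real.exp (-t)/t^3 * (c*t) * Complex.abs _
          ≤ Real.exp (-t)/t^3 * (c*t) * (8*(c*R*t)^2) := by
            exact mul_le_mul_of_nonneg_left hg2 (by positivity)
        _ ≤ 1/t^3 * (c*t) * (8*(c*R*t)^2) := by gcongr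
        _ = B₀ := by rw [hB₀_def]; field_simp
    · push_neg at hta
      simp only [hbound_def]
      rw [if_neg (not_le.2 hta)]
      have hwim_ge : y₀ ≤ (2*(Real.sqrt Real.pi:ℂ)*β*(t:ℂ)).im := by
        rw [hwim, hy₀_def]
        nlinarith [mul_le_mul himβ hta.le ha.le himβ0.le]
      have hcot := my_cot_upper _ y₀ hy₀ hwim_ge
      rw [← hM_def] at hcot
      have hyt : y₀ ≤ c*β.im*t := by rw [← hwim]; exact hwim_ge
      have hsin_low : s₁ ≤ Complex.abs (Complex.sin (2*(Real.sqrt Real.pi:ℂ)*β*(t:ℂ))) := by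
        refine le_trans ?_ (my_sin_lower_im _)
        rw [hwim, hs₁_def]
        have e1 : Real.exp y₀ ≤ Real.exp (c*β.im*t) := Real.exp_le_exp.2 hyt
        have e2 : Real.exp (-(c*β.im*t)) ≤ Real.exp (-y₀) := Real.exp_le_exp.2 (neg_le_neg hyt)
        linarith
      have hG : Complex.abs (Complex.cot (2*(Real.sqrt Real.pi:ℂ)*β*(t:ℂ))
          - (2*(Real.sqrt Real.pi:ℂ)*β*(t:ℂ)) / Complex.sin (2*(Real.sqrt Real.pi:ℂ)*β*(t:ℂ)) ^ 2
          + 2*(2*(Real.sqrt Real.pi:ℂ)*β*(t:ℂ))/3)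
          ≤ M + (c*R*t)/s₁^2 + (2/3)*(c*R*t) := by
        calc Complex.abs _
            ≤ Complex.abs (Complex.cot (2*(Real.sqrt Real.pi:ℂ)*β*(t:ℂ))
                - (2*(Real.sqrt Real.pi:ℂ)*β*(t:ℂ)) / Complex.sin (2*(Real.sqrt Real.pi:ℂ)*β*(t:ℂ)) ^ 2)
              + Complex.abs (2*(2*(Real.sqrt Real.pi:ℂ)*β*(t:ℂ))/3) := Complex.abs.add_le _ _
          _ ≤ (Complex.abs (Complex.cot (2*(Real.sqrt Real.pi:ℂ)*β*(t:ℂ)))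
              + Complex.abs ((2*(Real.sqrt Real.pi:ℂ)*β*(t:ℂ)) / Complex.sin (2*(Real.sqrt Real.pi:ℂ)*β*(t:ℂ)) ^ 2))
              + Complex.abs (2*(2*(Real.sqrt Real.pi:ℂ)*β*(t:ℂ))/3) := by
              have := Complex.abs.sub_le_add (Complex.cot (2*(Real.sqrt Real.pi:ℂ)*β*(t:ℂ)))
                ((2*(Real.sqrt Real.pi:ℂ)*β*(t:ℂ)) / Complex.sin (2*(Real.sqrt Real.pi:ℂ)*β*(t:ℂ)) ^ 2)
              linarith
          _ ≤ M + (c*R*t)/s₁^2 + (2/3)*(c*R*t) := by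
              have hd1 : Complex.abs ((2*(Real.sqrt Real.pi:ℂ)*β*(t:ℂ)) /
                  Complex.sin (2*(Real.sqrt Real.pi:ℂ)*β*(t:ℂ)) ^ 2) ≤ (c*R*t)/s₁^2 := by
                rw [map_div₀, map_pow, hwabs]
                apply div_le_div₀ (by positivity)
                · nlinarith [Complex.abs.nonneg β]
                · positivity
                · nlinarith [hsin_low, Complex.abs.nonneg (Complex.sin (2*(Real.sqrt Real.pi:ℂ)*β*(t:ℂ)))]
              have hd2 : Complex.abs (2*(2*(Real.sqrt Real.pi:ℂ)*β*(t:ℂ))/3) ≤ (2/3)*(c*R*t) := by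
                rw [map_div₀, map_mul, Complex.abs_two, hwabs]
                have : Complex.abs (3:ℂ) = 3 := by norm_num
                rw [this]
                nlinarith [Complex.abs.nonneg β]
              linarith
      have hkey : 1/t^3 * (c*t) * (M + (c*R*t)/s₁^2 + (2/3)*(c*R*t)) ≤ B₁ := by
        have heq : 1/t^3 * (c*t) * (M + (c*R*t)/s₁^2 + (2/3)*(c*R*t))
            = c*M/t^2 + c^2*R*(1/s₁^2 + 2/3)/t := by field_simp; ring
        rw [heq, hB₁_def]
        gcongr <;> linarith
      calc Real.exp (-t)/t^3 * (c*t) * Complex.abs _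
          ≤ Real.exp (-t)/t^3 * (c*t) * (M + (c*R*t)/s₁^2 + (2/3)*(c*R*t)) :=
            mul_le_mul_of_nonneg_left hG (by positivity)
        _ = (1/t^3 * (c*t) * (M + (c*R*t)/s₁^2 + (2/3)*(c*R*t))) * Real.exp (-t) := by ring
        _ ≤ B₁ * Real.exp (-t) := mul_le_mul_of_nonneg_right hkey hu0.le
  · -- bound integrable
    have hsplit : Set.Ioi (0:ℝ) = Set.Ioc 0 a ∪ Set.Ioi a := (Set.Ioc_union_Ioi_eq_Ioi ha.le).symm
    have : MeasureTheory.IntegrableOn bound (Set.Ioi 0) := by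
      rw [hsplit]
      apply MeasureTheory.IntegrableOn.union
      · refine (integrableOn_const (C := B₀) measure_Ioc_lt_top.ne).congr_fun ?_ measurableSet_Ioc
        intro t ht
        simp only [hbound_def]
        rw [if_pos ht.2]
      · have h0 : MeasureTheory.IntegrableOn (fun t : ℝ => B₁ * Real.exp (-t)) (Set.Ioi a) := by
          have := (exp_neg_integrableOn_Ioi a (zero_lt_one)).const_mul B₁
          simpa [IntegrableOn] using this
        refine h0.congr_fun ?_ measurableSet_Ioi
        intro t ht
        simp only [hbound_def]
        rw [if_neg (not_le.2 (show a < t from ht))]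
    exact this
  · -- differentiability
    filter_upwards [ae_restrict_mem measurableSet_Ioi] with t ht
    intro β hβ
    exact phi_hasDerivAt β ht (himball β hβ)

/-- For every `β` in the open first quadrant the integral defining `Φ(β)` converges
absolutely, and `β ↦ Φ(β)` is holomorphic on the open first quadrant. -/
theorem phi_integrable_and_holomorphic :
    (∀ β : ℂ, 0 < β.arg → β.arg < Real.pi / 2 →
      MeasureTheory.IntegrableOn (fun t : ℝ => phiIntegrand β t) (Set.Ioi 0)) ∧
    DifferentiableOn ℂ PhiRot {β : ℂ | 0 < β.arg ∧ β.arg < Real.pi / 2} := by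
  have himpos : ∀ β : ℂ, 0 < β.arg → β.arg < Real.pi/2 → 0 < β.im := by
    intro β h1 h2
    have hβ0 : β ≠ 0 := by
      intro h; rw [h] at h1; simp [Complex.arg_zero] at h1
    have hs : 0 < Real.sin β.arg :=
      Real.sin_pos_of_pos_of_lt_pi h1 (by linarith [Real.pi_pos])
    have habs := Complex.abs_mul_sin_arg β
    nlinarith [Complex.abs.pos hβ0]
  constructor
  · intro β h1 h2
    exact my_integrable (himpos β h1 h2)
  · intro β hβ
    have him := himpos β hβ.1 hβ.2
    have h := (phi_hasDerivAt_integral β him).const_mul (1/(8*(Real.pi:ℂ)^2))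
    have h2 : HasDerivAt PhiRot
        ((1/(8*(Real.pi:ℂ)^2)) * ∫ t in Set.Ioi (0:ℝ), phiDeriv β t) β := h
    exact h2.differentiableAt.differentiableWithinAt
end
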